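/- arXiv:2402.10049 — 7 statements merged into one kernel-verified Lean document; each statement's English description precedes it below -/
import Mathlib

section
/- Let R be a commutative ℚ-algebra, c ∈ R, and let g ∈ R⟦X⟧ be an odd formal power series with coefficient 1 in degree 1. Set a = 3·(coefficient of X³ in g). Suppose that in the two-variable formal power series ring R⟦y,z⟧ the identity 2c·g(y+z)²·g(y)³·g(z)³ + 2·g'(z)·g(y)³ + 2·g'(y)·g(z)³ = g(y+z)·( −g''(z)·g(y)²·g(z) − g''(y)·g(z)²·g(y) + 2·g'(z)²·g(y)² + 2·g'(y)²·g(z)² − 2·g'(y)·g'(z)·g(y)·g(z) ) holds, where g(y), g(z), g(y+z), g'(y), g'(z), g''(y), g''(z) denote substitution of the indicated series (which have zero constant term) into g and its formal derivatives. Then c = 0 and there exists ε ∈ R such that (g')² = 1 + 2a·g² + ε·g⁴ in R⟦X⟧. -/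
open PowerSeries

/-- Formal substitution of a multivariate power series `h` (assumed to have zero
constant term) into a one-variable power series `g`: the coefficient of a monomial `d`
in `g(h)` only involves the powers `h ^ k` for `k` at most the total degree of `d`,
since `h ^ k` has order at least `k`. -/
noncomputable def PowerSeries.substMv {R : Type*} [CommSemiring R] {σ : Type*}
    (h : MvPowerSeries σ R) (g : PowerSeries R) : MvPowerSeries σ R :=
  fun d => ∑ k ∈ Finset.range ((d.sum fun _ n => n) + 1),
    PowerSeries.coeff (R := R) k g * MvPowerSeries.coeff (R := R) d (h ^ k)

namespace Rigidity

open Finsupp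

variable {R : Type*} [CommRing R]

lemma fin2_eq (u : Fin 2 →₀ ℕ) : u = single 0 (u 0) + single 1 (u 1) := by
  ext x
  fin_cases x <;> simp [Finsupp.single_apply]

lemma fin2_apply0 (m n : ℕ) : (single (0:Fin 2) m + single 1 n : Fin 2 →₀ ℕ) 0 = m := by
  simp [Finsupp.single_apply]

lemma fin2_apply1 (m n : ℕ) : (single (0:Fin 2) m + single 1 n : Fin 2 →₀ ℕ) 1 = n := by
  simp [Finsupp.single_apply]

lemma fin2_zero_iff (m n : ℕ) :
    (single (0:Fin 2) m + single 1 n : Fin 2 →₀ ℕ) = 0 ↔ m = 0 ∧ n = 0 := by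
  constructor
  · intro h
    have h0 := congrArg (fun w : Fin 2 →₀ ℕ => w 0) h
    have h1 := congrArg (fun w : Fin 2 →₀ ℕ => w 1) h
    simp only [fin2_apply0, fin2_apply1] at h0 h1
    exact ⟨h0, h1⟩
  · rintro ⟨rfl, rfl⟩
    simp

/-- The underlying function of `e`. -/
noncomputable def eFun (f : MvPowerSeries (Fin 2) R) : PowerSeries (PowerSeries R) :=
  PowerSeries.mk fun n => PowerSeries.mk fun m =>
    MvPowerSeries.coeff (R := R) (single 0 m + single 1 n) f

lemma coeff_eFun (f : MvPowerSeries (Fin 2) R) (n m : ℕ) :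
    coeff (R := R) m (coeff (R := R⟦X⟧) n (eFun f)) = MvPowerSeries.coeff (R := R) (single 0 m + single 1 n) f := by
  simp [eFun]

/-- The ring homomorphism `R⟦y,z⟧ → R⟦y⟧⟦z⟧`. -/
noncomputable def e : MvPowerSeries (Fin 2) R →+* PowerSeries (PowerSeries R) where
  toFun := eFun
  map_zero' := by
    ext n m
    simp [eFun]
  map_add' f g := by
    ext n m
    simp [eFun]
  map_one' := by
    ext n m
    classical
    rw [coeff_eFun, MvPowerSeries.coeff_one, PowerSeries.coeff_one,
      apply_ite (PowerSeries.coeff (R := R) m), PowerSeries.coeff_one, map_zero]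
    by_cases hn : n = 0 <;> by_cases hm : m = 0 <;>
      simp [hn, hm, fin2_zero_iff]
  map_mul' f g := by
    show eFun (f * g) = eFun f * eFun g
    ext n m
    classical
    rw [coeff_eFun, PowerSeries.coeff_mul, map_sum, MvPowerSeries.coeff_mul]
    simp only [PowerSeries.coeff_mul, coeff_eFun]
    rw [← Finset.sum_product']
    refine Finset.sum_nbij' (fun uv => ((uv.1 1, uv.2 1), (uv.1 0, uv.2 0)))
      (fun pq => (single 0 pq.2.1 + single 1 pq.1.1, single 0 pq.2.2 + single 1 pq.1.2))
      ?_ ?_ ?_ ?_ ?_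
    · rintro ⟨u, v⟩ huv
      rw [Finset.HasAntidiagonal.mem_antidiagonal] at huv
      have h0 := congrArg (fun w : Fin 2 →₀ ℕ => w 0) huv
      have h1 := congrArg (fun w : Fin 2 →₀ ℕ => w 1) huv
      simp only [Finsupp.add_apply, Finsupp.single_apply] at h0 h1
      norm_num at h0 h1
      simp only [Finset.mem_product, Finset.HasAntidiagonal.mem_antidiagonal]
      exact ⟨h1, h0⟩
    · rintro ⟨⟨i, j⟩, ⟨p, q⟩⟩ h
      simp only [Finset.mem_product, Finset.HasAntidiagonal.mem_antidiagonal] at h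
      simp only [Finset.HasAntidiagonal.mem_antidiagonal]
      obtain ⟨hij, hpq⟩ := h
      rw [add_add_add_comm, ← Finsupp.single_add, ← Finsupp.single_add, hij, hpq]
    · rintro ⟨u, v⟩ _
      simp only [Prod.mk.injEq]
      exact ⟨(fin2_eq u).symm, (fin2_eq v).symm⟩
    · rintro ⟨⟨i, j⟩, ⟨p, q⟩⟩ _
      simp [fin2_apply0, fin2_apply1]
    · rintro ⟨u, v⟩ huv
      dsimp only
      rw [← fin2_eq u, ← fin2_eq v]

lemma fin2_pair_iff (m n m' n' : ℕ) :
    (single (0:Fin 2) m + single 1 n : Fin 2 →₀ ℕ) = single 0 m' + single 1 n' ↔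
      m = m' ∧ n = n' := by
  constructor
  · intro h
    have h0 := congrArg (fun w : Fin 2 →₀ ℕ => w 0) h
    have h1 := congrArg (fun w : Fin 2 →₀ ℕ => w 1) h
    simp only [Finsupp.add_apply, Finsupp.single_apply] at h0 h1
    norm_num at h0 h1
    exact ⟨h0, h1⟩
  · rintro ⟨rfl, rfl⟩
    rfl

lemma fin2_degree (m n : ℕ) :
    ((single (0:Fin 2) m + single 1 n : Fin 2 →₀ ℕ).sum fun _ k => k) = m + n := by
  rw [Finsupp.sum_add_index' (fun _ => rfl) (fun _ _ _ => rfl),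
    Finsupp.sum_single_index rfl, Finsupp.sum_single_index rfl]

lemma coeff_substMv (h : MvPowerSeries (Fin 2) R) (F : R⟦X⟧) (d : Fin 2 →₀ ℕ) :
    MvPowerSeries.coeff (R := R) d (substMv h F) =
      ∑ k ∈ Finset.range ((d.sum fun _ k => k) + 1),
        coeff (R := R) k F * MvPowerSeries.coeff (R := R) d (h ^ k) := rfl

lemma e_substMv_Y (F : R⟦X⟧) :
    e (substMv (MvPowerSeries.X 0 : MvPowerSeries (Fin 2) R) F) = C (R := R⟦X⟧) F := by
  apply PowerSeries.ext; intro n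
  apply PowerSeries.ext; intro m
  classical
  rw [show (e (substMv (MvPowerSeries.X 0 : MvPowerSeries (Fin 2) R) F)) =
    eFun (substMv (MvPowerSeries.X 0 : MvPowerSeries (Fin 2) R) F) from rfl]
  rw [coeff_eFun, coeff_substMv, fin2_degree, PowerSeries.coeff_C]
  have hco : ∀ k, MvPowerSeries.coeff (R := R) (single 0 m + single 1 n)
      ((MvPowerSeries.X 0 : MvPowerSeries (Fin 2) R) ^ k) = if m = k ∧ n = 0 then 1 else 0 := by
    intro k
    rw [MvPowerSeries.coeff_X_pow]
    by_cases hc : m = k ∧ n = 0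
    · obtain ⟨rfl, rfl⟩ := hc
      rw [show (single (0:Fin 2) m + single 1 0 : Fin 2 →₀ ℕ) = single 0 m by simp]
      simp
    · rw [if_neg, if_neg hc]
      intro hcon
      apply hc
      have := (fin2_pair_iff m n k 0).mp (by rw [hcon]; simp)
      exact this
  simp only [hco]
  by_cases hn : n = 0
  · subst hn
    rw [if_pos rfl]
    rw [Finset.sum_eq_single m]
    · simp
    · intro b _ hb
      rw [if_neg (by tauto), mul_zero]
    · intro hm
      exact absurd (Finset.mem_range.mpr (by omega)) hm
  · rw [if_neg hn]
    apply Finset.sum_eq_zero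
    intro b _
    rw [if_neg (by tauto), mul_zero]

lemma e_substMv_Z (F : R⟦X⟧) :
    e (substMv (MvPowerSeries.X 1 : MvPowerSeries (Fin 2) R) F) = PowerSeries.map (C (R := R)) F := by
  apply PowerSeries.ext; intro n
  apply PowerSeries.ext; intro m
  classical
  rw [show (e (substMv (MvPowerSeries.X 1 : MvPowerSeries (Fin 2) R) F)) =
    eFun (substMv (MvPowerSeries.X 1 : MvPowerSeries (Fin 2) R) F) from rfl]
  rw [coeff_eFun, coeff_substMv, fin2_degree, PowerSeries.coeff_map, PowerSeries.coeff_C]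
  have hco : ∀ k, MvPowerSeries.coeff (R := R) (single 0 m + single 1 n)
      ((MvPowerSeries.X 1 : MvPowerSeries (Fin 2) R) ^ k) = if n = k ∧ m = 0 then 1 else 0 := by
    intro k
    rw [MvPowerSeries.coeff_X_pow]
    by_cases hc : n = k ∧ m = 0
    · obtain ⟨rfl, rfl⟩ := hc
      rw [show (single (0:Fin 2) 0 + single 1 n : Fin 2 →₀ ℕ) = single 1 n by simp]
      simp
    · rw [if_neg, if_neg hc]
      intro hcon
      apply hc
      have := (fin2_pair_iff m n 0 k).mp (by rw [hcon]; simp)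
      exact ⟨this.2, this.1⟩
  simp only [hco]
  by_cases hm : m = 0
  · subst hm
    rw [if_pos rfl]
    rw [Finset.sum_eq_single n]
    · simp
    · intro b _ hb
      rw [if_neg (by tauto), mul_zero]
    · intro hn
      exact absurd (Finset.mem_range.mpr (by omega)) hn
  · rw [if_neg hm]
    apply Finset.sum_eq_zero
    intro b _
    rw [if_neg (by tauto), mul_zero]

lemma e_C (c : R) :
    e (MvPowerSeries.C (σ := Fin 2) (R := R) c) = C (R := R⟦X⟧) (C (R := R) c) := by
  apply PowerSeries.ext; intro n
  apply PowerSeries.ext; intro m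
  classical
  rw [show (e (MvPowerSeries.C (σ := Fin 2) (R := R) c)) = eFun (MvPowerSeries.C (σ := Fin 2) (R := R) c) from rfl]
  rw [coeff_eFun, MvPowerSeries.coeff_C]
  by_cases hn : n = 0 <;> by_cases hm : m = 0 <;>
    simp [hn, hm, fin2_zero_iff, PowerSeries.coeff_C]

lemma coeff_YZ_pow (k m n : ℕ) :
    MvPowerSeries.coeff (R := R) (single 0 m + single 1 n)
      ((MvPowerSeries.X 0 + MvPowerSeries.X 1 : MvPowerSeries (Fin 2) R) ^ k) =
      if m + n = k then (k.choose n : R) else 0 := by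
  classical
  rw [add_pow, map_sum]
  have hterm : ∀ j, MvPowerSeries.coeff (R := R) (single 0 m + single 1 n)
      ((MvPowerSeries.X 0 : MvPowerSeries (Fin 2) R) ^ j * MvPowerSeries.X 1 ^ (k - j)
        * (k.choose j : MvPowerSeries (Fin 2) R)) =
      if m = j ∧ n = k - j then (k.choose j : R) else 0 := by
    intro j
    rw [← map_natCast (MvPowerSeries.C (σ := Fin 2) (R := R)) (k.choose j), MvPowerSeries.coeff_mul_C,
      MvPowerSeries.X_pow_eq, MvPowerSeries.X_pow_eq, MvPowerSeries.monomial_mul_monomial,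
      one_mul, MvPowerSeries.coeff_monomial]
    by_cases hc : m = j ∧ n = k - j
    · obtain ⟨rfl, rfl⟩ := hc
      rw [if_pos rfl, if_pos ⟨rfl, rfl⟩, one_mul]
    · rw [if_neg, if_neg hc, zero_mul]
      intro hcon
      exact hc ((fin2_pair_iff m n j (k - j)).mp hcon)
  simp only [hterm]
  by_cases hk : m + n = k
  · rw [if_pos hk]
    rw [Finset.sum_eq_single m]
    · rw [if_pos ⟨rfl, by omega⟩]
      have hn : n = k - m := by omega
      subst hn
      rw [Nat.choose_symm (by omega : m ≤ k)]
    · intro b hb hbm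
      rw [if_neg (by tauto)]
    · intro hm
      exact absurd (Finset.mem_range.mpr (by omega)) hm
  · rw [if_neg hk]
    apply Finset.sum_eq_zero
    intro b hb
    rw [Finset.mem_range] at hb
    rw [if_neg]
    rintro ⟨rfl, rfl⟩
    omega
  
lemma coeff_e_substMv_YZ (F : R⟦X⟧) (n m : ℕ) :
    coeff (R := R) m (coeff (R := R⟦X⟧) n
      (e (substMv (MvPowerSeries.X 0 + MvPowerSeries.X 1 : MvPowerSeries (Fin 2) R) F))) =
      ((m + n).choose n : R) * coeff (R := R) (m + n) F := by
  rw [show (e (substMv (MvPowerSeries.X 0 + MvPowerSeries.X 1 : MvPowerSeries (Fin 2) R) F)) =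
    eFun (substMv (MvPowerSeries.X 0 + MvPowerSeries.X 1 : MvPowerSeries (Fin 2) R) F) from rfl]
  rw [coeff_eFun, coeff_substMv, fin2_degree]
  simp only [coeff_YZ_pow]
  rw [Finset.sum_eq_single (m + n)]
  · rw [if_pos rfl, mul_comm]
  · intro b _ hb
    rw [if_neg (by omega), mul_zero]
  · intro hmn
    exact absurd (Finset.mem_range.mpr (by omega)) hmn

section OneVar

variable {S : Type*} [CommRing S]

lemma coeff0_mul (f h : S⟦X⟧) : coeff (R := S) 0 (f * h) = coeff (R := S) 0 f * coeff (R := S) 0 h := by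
  rw [PowerSeries.coeff_mul, Finset.Nat.sum_antidiagonal_eq_sum_range_succ_mk]
  norm_num

lemma coeff1_mul (f h : S⟦X⟧) : coeff (R := S) 1 (f * h) =
    coeff (R := S) 0 f * coeff (R := S) 1 h + coeff (R := S) 1 f * coeff (R := S) 0 h := by
  rw [PowerSeries.coeff_mul, Finset.Nat.sum_antidiagonal_eq_sum_range_succ_mk]
  norm_num [Finset.sum_range_succ]

lemma coeff2_mul (f h : S⟦X⟧) : coeff (R := S) 2 (f * h) =
    coeff (R := S) 0 f * coeff (R := S) 2 h + coeff (R := S) 1 f * coeff (R := S) 1 h + coeff (R := S) 2 f * coeff (R := S) 0 h := by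
  rw [PowerSeries.coeff_mul, Finset.Nat.sum_antidiagonal_eq_sum_range_succ_mk]
  norm_num [Finset.sum_range_succ]

lemma coeff3_mul (f h : S⟦X⟧) : coeff (R := S) 3 (f * h) =
    coeff (R := S) 0 f * coeff (R := S) 3 h + coeff (R := S) 1 f * coeff (R := S) 2 h + coeff (R := S) 2 f * coeff (R := S) 1 h
      + coeff (R := S) 3 f * coeff (R := S) 0 h := by
  rw [PowerSeries.coeff_mul, Finset.Nat.sum_antidiagonal_eq_sum_range_succ_mk]
  norm_num [Finset.sum_range_succ]

/-- All odd coefficients vanish. -/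
def IsEvenS (f : S⟦X⟧) : Prop := ∀ n : ℕ, Odd n → coeff (R := S) n f = 0

/-- All even coefficients vanish. -/
def IsOddS (f : S⟦X⟧) : Prop := ∀ n : ℕ, Even n → coeff (R := S) n f = 0

lemma IsEvenS.mul {f h : S⟦X⟧} (hf : IsEvenS f) (hh : IsEvenS h) : IsEvenS (f * h) := by
  intro n hn
  rw [PowerSeries.coeff_mul]
  apply Finset.sum_eq_zero
  rintro ⟨i, j⟩ hij
  rw [Finset.HasAntidiagonal.mem_antidiagonal] at hij
  rcases Nat.even_or_odd i with hi | hi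
  · have hj : Odd j := by
      rw [Nat.odd_iff] at hn ⊢; rw [Nat.even_iff] at hi; omega
    rw [hh j hj, mul_zero]
  · rw [hf i hi, zero_mul]

lemma IsOddS.mul_odd {f h : S⟦X⟧} (hf : IsOddS f) (hh : IsOddS h) : IsEvenS (f * h) := by
  intro n hn
  rw [PowerSeries.coeff_mul]
  apply Finset.sum_eq_zero
  rintro ⟨i, j⟩ hij
  rw [Finset.HasAntidiagonal.mem_antidiagonal] at hij
  rcases Nat.even_or_odd i with hi | hi
  · rw [hf i hi, zero_mul]
  · have hj : Even j := by
      rw [Nat.odd_iff] at hn hi; rw [Nat.even_iff]; omega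
    rw [hh j hj, mul_zero]

lemma IsEvenS.mul_odd {f h : S⟦X⟧} (hf : IsEvenS f) (hh : IsOddS h) : IsOddS (f * h) := by
  intro n hn
  rw [PowerSeries.coeff_mul]
  apply Finset.sum_eq_zero
  rintro ⟨i, j⟩ hij
  rw [Finset.HasAntidiagonal.mem_antidiagonal] at hij
  rcases Nat.even_or_odd i with hi | hi
  · have hj : Even j := by
      rw [Nat.even_iff] at hn hi ⊢; omega
    rw [hh j hj, mul_zero]
  · rw [hf i hi, zero_mul]

lemma IsOddS.deriv {f : S⟦X⟧} (hf : IsOddS f) : IsEvenS (d⁄dX S f) := by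
  intro n hn
  rw [PowerSeries.coeff_derivative, hf (n + 1) (by rcases hn with ⟨w, hw⟩; exact ⟨w + 1, by omega⟩),
    zero_mul]

lemma IsEvenS.deriv {f : S⟦X⟧} (hf : IsEvenS f) : IsOddS (d⁄dX S f) := by
  intro n hn
  rw [PowerSeries.coeff_derivative, hf (n + 1) (by rcases hn with ⟨w, rfl⟩; exact ⟨w, by omega⟩),
    zero_mul]

lemma coeff_pow_lt {f : S⟦X⟧} (h0 : coeff (R := S) 0 f = 0) :
    ∀ N k : ℕ, k < N → coeff (R := S) k (f ^ N) = 0 := by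
  intro N
  induction N with
  | zero => omega
  | succ N IH =>
    intro k hk
    rw [pow_succ, PowerSeries.coeff_mul]
    apply Finset.sum_eq_zero
    rintro ⟨i, j⟩ hij
    rw [Finset.HasAntidiagonal.mem_antidiagonal] at hij
    by_cases hiN : i < N
    · rw [IH i hiN, zero_mul]
    · have : j = 0 := by omega
      subst this
      rw [h0, mul_zero]

lemma coeff_pow_self {f : S⟦X⟧} (h0 : coeff (R := S) 0 f = 0) (N : ℕ) :
    coeff (R := S) N (f ^ N) = (coeff (R := S) 1 f) ^ N := by
  induction N with
  | zero => simp
  | succ N IH =>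
    rw [pow_succ, PowerSeries.coeff_mul]
    rw [Finset.sum_eq_single_of_mem (N, 1) (by rw [Finset.HasAntidiagonal.mem_antidiagonal])]
    · rw [IH, pow_succ]
    · rintro ⟨i, j⟩ hij hne
      rw [Finset.HasAntidiagonal.mem_antidiagonal] at hij
      by_cases hiN : i < N
      · rw [coeff_pow_lt h0 N i hiN, zero_mul]
      · by_cases hi2 : i = N
        · subst hi2
          have : j = 1 := by omega
          subst this
          exact absurd rfl hne
        · have : j = 0 := by omega
          subst this
          rw [h0, mul_zero]

end OneVar

section QAlg

variable {S : Type*} [CommRing S] [Algebra ℚ S]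

lemma int_cancel {z : ℤ} (hz : z ≠ 0) {x : S} (h : (z : S) * x = 0) : x = 0 := by
  have h2 : ((z : ℚ)) • x = 0 := by
    rw [Algebra.smul_def, map_intCast]
    exact h
  have h3 := congrArg (fun y => ((z : ℚ))⁻¹ • y) h2
  simpa [smul_smul, inv_mul_cancel₀ (by exact_mod_cast hz : ((z : ℚ)) ≠ 0)] using h3

lemma key_vanish (k : ℕ) (g u : S⟦X⟧) (hg0 : coeff (R := S) 0 g = 0) (hg1 : coeff (R := S) 1 g = 1)
    (hu : coeff (R := S) k u = 0)
    (h : (d⁄dX S u) * g = (C (R := S) ((k : ℕ) : S)) * ((d⁄dX S g) * u)) : u = 0 := by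
  apply PowerSeries.ext
  intro n
  rw [map_zero]
  induction n using Nat.strong_induction_on with
  | _ n IH =>
  by_cases hnk : n = k
  · subst hnk; exact hu
  have hc := congrArg (coeff (R := S) n) h
  rw [PowerSeries.coeff_C_mul] at hc
  rcases n with _ | m
  · rw [coeff0_mul, coeff0_mul, hg0, mul_zero, PowerSeries.coeff_derivative, hg1] at hc
    refine int_cancel (z := (k : ℤ)) (by omega) ?_
    push_cast
    linear_combination -hc
  · rw [PowerSeries.coeff_mul, PowerSeries.coeff_mul,
      Finset.sum_eq_single_of_mem (m, 1) (by rw [Finset.HasAntidiagonal.mem_antidiagonal]),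
      Finset.sum_eq_single_of_mem (0, m + 1) (by rw [Finset.HasAntidiagonal.mem_antidiagonal]; omega)] at hc
    · dsimp only at hc
      rw [PowerSeries.coeff_derivative, PowerSeries.coeff_derivative, hg1] at hc
      refine int_cancel (z := (m : ℤ) + 1 - (k : ℤ)) (by omega) ?_
      push_cast
      linear_combination hc
    · rintro ⟨i, j⟩ hij hne
      rw [Finset.HasAntidiagonal.mem_antidiagonal] at hij
      rcases Nat.lt_or_ge j (m + 1) with hj | hj
      · rw [IH j (by omega), mul_zero]
      · have hj2 : j = m + 1 := by omega
        subst hj2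
        have : i = 0 := by omega
        subst this
        exact absurd rfl hne
    · rintro ⟨i, j⟩ hij hne
      rw [Finset.HasAntidiagonal.mem_antidiagonal] at hij
      rw [PowerSeries.coeff_derivative]
      rcases Nat.lt_or_ge (i + 1) (m + 1) with hi | hi
      · rw [IH (i + 1) (by omega), zero_mul, zero_mul]
      · by_cases hi2 : i = m
        · subst hi2
          have : j = 1 := by omega
          subst this
          exact absurd rfl hne
        · have : j = 0 := by omega
          subst this
          rw [hg0, mul_zero]

end QAlg

section Tau

variable {R : Type*} [CommRing R]

lemma tau_coeff0 (g : R⟦X⟧) :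
    coeff (R := R⟦X⟧) 0 (e (substMv
      (MvPowerSeries.X 0 + MvPowerSeries.X 1 : MvPowerSeries (Fin 2) R) g)) = g := by
  apply PowerSeries.ext; intro m
  rw [coeff_e_substMv_YZ]
  simp

lemma tau_coeff1 (g : R⟦X⟧) :
    coeff (R := R⟦X⟧) 1 (e (substMv
      (MvPowerSeries.X 0 + MvPowerSeries.X 1 : MvPowerSeries (Fin 2) R) g)) = d⁄dX R g := by
  apply PowerSeries.ext; intro m
  rw [coeff_e_substMv_YZ, PowerSeries.coeff_derivative, Nat.choose_one_right]
  push_cast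
  ring

lemma tau_coeff2 (g : R⟦X⟧) :
    2 * coeff (R := R⟦X⟧) 2 (e (substMv
      (MvPowerSeries.X 0 + MvPowerSeries.X 1 : MvPowerSeries (Fin 2) R) g))
      = d⁄dX R (d⁄dX R g) := by
  apply PowerSeries.ext; intro m
  rw [two_mul, map_add, coeff_e_substMv_YZ, PowerSeries.coeff_derivative,
    PowerSeries.coeff_derivative]
  have h2 : (m + 2).choose 2 * 2 = (m + 2) * (m + 1) := by
    have h := Nat.add_one_mul_choose_eq (m + 1) 1
    rw [Nat.choose_one_right] at h
    simp only [Nat.succ_eq_add_one, show m + 1 + 1 = m + 2 by omega,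
      show 1 + 1 = 2 by omega] at h
    omega
  have hc := congrArg (fun t : ℕ => (t : R) * coeff (R := R) (m + 2) g) h2
  push_cast at hc ⊢
  linear_combination hc

lemma tau_coeff3 (g : R⟦X⟧) :
    6 * coeff (R := R⟦X⟧) 3 (e (substMv
      (MvPowerSeries.X 0 + MvPowerSeries.X 1 : MvPowerSeries (Fin 2) R) g))
      = d⁄dX R (d⁄dX R (d⁄dX R g)) := by
  apply PowerSeries.ext; intro m
  have h2 : (m + 2).choose 2 * 2 = (m + 2) * (m + 1) := by
    have h := Nat.add_one_mul_choose_eq (m + 1) 1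
    rw [Nat.choose_one_right] at h
    simp only [Nat.succ_eq_add_one, show m + 1 + 1 = m + 2 by omega,
      show 1 + 1 = 2 by omega] at h
    omega
  have h3 := Nat.add_one_mul_choose_eq (m + 2) 2
  have h6 : (m + 3).choose 3 * 6 = (m + 3) * ((m + 2) * (m + 1)) := by
    calc (m + 3).choose 3 * 6 = (m + 3).choose 3 * 3 * 2 := by ring
    _ = ((m + 3) * (m + 2).choose 2) * 2 := by rw [h3]
    _ = (m + 3) * ((m + 2).choose 2 * 2) := by ring
    _ = (m + 3) * ((m + 2) * (m + 1)) := by rw [h2]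
  have hc := congrArg (fun t : ℕ => (t : R) * coeff (R := R) (m + 3) g) h6
  rw [show (6 : R⟦X⟧) = ((6 : ℕ) : R⟦X⟧) by norm_num, ← nsmul_eq_mul, map_nsmul,
    coeff_e_substMv_YZ, PowerSeries.coeff_derivative, PowerSeries.coeff_derivative,
    PowerSeries.coeff_derivative]
  push_cast at hc ⊢
  linear_combination hc

lemma tau2_odd (g : R⟦X⟧) (hodd : ∀ n, Even n → PowerSeries.coeff (R := R) n g = 0) :
    IsOddS (coeff (R := R⟦X⟧) 2 (e (substMv
      (MvPowerSeries.X 0 + MvPowerSeries.X 1 : MvPowerSeries (Fin 2) R) g))) := by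
  intro m hm
  rw [coeff_e_substMv_YZ, hodd (m + 2) (by rcases hm with ⟨w, rfl⟩; exact ⟨w + 1, by ring⟩),
    mul_zero]

lemma tau3_even (g : R⟦X⟧) (hodd : ∀ n, Even n → PowerSeries.coeff (R := R) n g = 0) :
    IsEvenS (coeff (R := R⟦X⟧) 3 (e (substMv
      (MvPowerSeries.X 0 + MvPowerSeries.X 1 : MvPowerSeries (Fin 2) R) g))) := by
  intro m hm
  rw [coeff_e_substMv_YZ, hodd (m + 3) (by rcases hm with ⟨w, rfl⟩; exact ⟨w + 2, by ring⟩),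
    mul_zero]

end Tau

section Parity2

variable {S : Type*} [CommRing S]

lemma IsEvenS.add {f h : S⟦X⟧} (hf : IsEvenS f) (hh : IsEvenS h) : IsEvenS (f + h) := by
  intro n hn
  rw [map_add, hf n hn, hh n hn, add_zero]

lemma IsEvenS.neg {f : S⟦X⟧} (hf : IsEvenS f) : IsEvenS (-f) := by
  intro n hn
  rw [map_neg, hf n hn, neg_zero]

lemma IsEvenS.sub {f h : S⟦X⟧} (hf : IsEvenS f) (hh : IsEvenS h) : IsEvenS (f - h) := by
  intro n hn
  rw [map_sub, hf n hn, hh n hn, sub_zero]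

lemma IsEvenS_C (x : S) : IsEvenS (C (R := S) x) := by
  intro n hn
  rw [PowerSeries.coeff_C, if_neg]
  rintro rfl
  exact (Nat.not_odd_iff_even.mpr (by norm_num)) hn

lemma IsEvenS_ofNat (n : ℕ) [n.AtLeastTwo] : IsEvenS (OfNat.ofNat n : S⟦X⟧) := by
  rw [← map_ofNat (C (R := S)) n]
  exact IsEvenS_C _

lemma IsEvenS_two : IsEvenS (2 : S⟦X⟧) := by
  rw [show (2 : S⟦X⟧) = C (R := S) 2 from (map_ofNat (C (R := S)) 2).symm]
  exact IsEvenS_C 2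

end Parity2

lemma coeff_two {S : Type*} [CommRing S] (n : ℕ) :
    coeff (R := S) n (2 : S⟦X⟧) = if n = 0 then 2 else 0 := by
  rw [show (2 : S⟦X⟧) = C (R := S) 2 from (map_ofNat (C (R := S)) 2).symm, PowerSeries.coeff_C]


end Rigidity

open Rigidity

/-- If `g` is an odd power series with linear coefficient `1` over a commutative
`ℚ`-algebra, `a = 3·(coefficient of X³ in g)`, and the two-variable rigidity identity
holds in `R⟦y,z⟧`, then `c = 0` and `(g')² = 1 + 2a·g² + ε·g⁴` for some `ε ∈ R`. -/
theorem statement0 {R : Type*} [CommRing R] [Algebra ℚ R] (c : R) (g : PowerSeries R)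
    (hodd : ∀ n, Even n → PowerSeries.coeff (R := R) n g = 0)
    (h1 : PowerSeries.coeff (R := R) 1 g = 1)
    (a : R) (ha : a = 3 * PowerSeries.coeff (R := R) 3 g)
    (heq :
      letI Y : MvPowerSeries (Fin 2) R := MvPowerSeries.X 0
      letI Z : MvPowerSeries (Fin 2) R := MvPowerSeries.X 1
      2 * MvPowerSeries.C (σ := Fin 2) (R := R) c * (substMv (Y + Z) g) ^ 2 * (substMv Y g) ^ 3
            * (substMv Z g) ^ 3
          + 2 * substMv Z (d⁄dX R g) * (substMv Y g) ^ 3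
          + 2 * substMv Y (d⁄dX R g) * (substMv Z g) ^ 3
        = substMv (Y + Z) g *
            (-(substMv Z (d⁄dX R (d⁄dX R g)) * (substMv Y g) ^ 2 * substMv Z g)
              - substMv Y (d⁄dX R (d⁄dX R g)) * (substMv Z g) ^ 2 * substMv Y g
              + 2 * (substMv Z (d⁄dX R g)) ^ 2 * (substMv Y g) ^ 2
              + 2 * (substMv Y (d⁄dX R g)) ^ 2 * (substMv Z g) ^ 2
              - 2 * substMv Y (d⁄dX R g) * substMv Z (d⁄dX R g)
                  * substMv Y g * substMv Z g)) :
    c = 0 ∧ ∃ ε : R,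
      (d⁄dX R g) ^ 2 = 1 + 2 * PowerSeries.C (R := R) a * g ^ 2 + PowerSeries.C (R := R) ε * g ^ 4 := by
  classical
  replace heq :
      2 * MvPowerSeries.C (σ := Fin 2) (R := R) c
          * (substMv (MvPowerSeries.X 0 + MvPowerSeries.X 1) g) ^ 2
          * (substMv (MvPowerSeries.X 0) g) ^ 3 * (substMv (MvPowerSeries.X 1) g) ^ 3
        + 2 * substMv (MvPowerSeries.X 1) (d⁄dX R g) * (substMv (MvPowerSeries.X 0) g) ^ 3
        + 2 * substMv (MvPowerSeries.X 0) (d⁄dX R g) * (substMv (MvPowerSeries.X 1) g) ^ 3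
      = substMv (MvPowerSeries.X 0 + MvPowerSeries.X 1) g *
          (-(substMv (MvPowerSeries.X 1) (d⁄dX R (d⁄dX R g))
                * (substMv (MvPowerSeries.X 0) g) ^ 2 * substMv (MvPowerSeries.X 1) g)
            - substMv (MvPowerSeries.X 0) (d⁄dX R (d⁄dX R g))
                * (substMv (MvPowerSeries.X 1) g) ^ 2 * substMv (MvPowerSeries.X 0) g
            + 2 * (substMv (MvPowerSeries.X 1) (d⁄dX R g)) ^ 2
                * (substMv (MvPowerSeries.X 0) g) ^ 2
            + 2 * (substMv (MvPowerSeries.X 0) (d⁄dX R g)) ^ 2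
                * (substMv (MvPowerSeries.X 1) g) ^ 2
            - 2 * substMv (MvPowerSeries.X 0) (d⁄dX R g)
                * substMv (MvPowerSeries.X 1) (d⁄dX R g)
                * substMv (MvPowerSeries.X 0) g * substMv (MvPowerSeries.X 1) g) := heq
  -- basic coefficient facts
  have hg0 : coeff (R := R) 0 g = 0 := hodd 0 ⟨0, rfl⟩
  have hg2' : coeff (R := R) 2 g = 0 := hodd 2 ⟨1, rfl⟩
  have hg4' : coeff (R := R) 4 g = 0 := hodd 4 ⟨2, rfl⟩
  have hdg0 : coeff (R := R) 0 (d⁄dX R g) = 1 := by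
    rw [PowerSeries.coeff_derivative, h1]; norm_num
  have hdg1 : coeff (R := R) 1 (d⁄dX R g) = 0 := by
    rw [PowerSeries.coeff_derivative, hg2']; ring
  have hdg2 : coeff (R := R) 2 (d⁄dX R g) = 3 * coeff (R := R) 3 g := by
    rw [PowerSeries.coeff_derivative]; push_cast; ring
  have hdg3 : coeff (R := R) 3 (d⁄dX R g) = 0 := by
    rw [PowerSeries.coeff_derivative, hg4']; ring
  have hq0 : coeff (R := R) 0 (d⁄dX R (d⁄dX R g)) = 0 := by
    rw [PowerSeries.coeff_derivative, hdg1]; ring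
  have hq1 : coeff (R := R) 1 (d⁄dX R (d⁄dX R g)) = 2 * a := by
    rw [PowerSeries.coeff_derivative, hdg2, ha]; push_cast; ring
  have hq2 : coeff (R := R) 2 (d⁄dX R (d⁄dX R g)) = 0 := by
    rw [PowerSeries.coeff_derivative, hdg3]; ring
  -- apply the ring homomorphism e
  have hE := congrArg (Rigidity.e (R := R)) heq
  simp only [map_add, map_mul, map_pow, map_neg, map_sub, map_ofNat,
    e_substMv_Y, e_substMv_Z, e_C] at hE
  have h3 := congrArg (coeff (R := R⟦X⟧) 3) hE
  simp only [pow_succ, pow_zero, one_mul, map_add, map_neg, map_sub,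
    coeff3_mul, coeff2_mul, coeff1_mul, coeff0_mul,
    PowerSeries.coeff_map, PowerSeries.coeff_C, coeff_two, tau_coeff0, tau_coeff1,
    hg0, h1, hg2', hdg0, hdg1, hdg2, hdg3, hq0, hq1, hq2] at h3
  norm_num at h3
  -- normalize the constants C 2, C 3 to numerals
  have hC2 : (C (R := R) 2 : R⟦X⟧) = 2 := map_ofNat (C (R := R)) 2
  have hC3 : (C (R := R) 3 : R⟦X⟧) = 3 := map_ofNat (C (R := R)) 3
  rw [hC2, hC3] at h3
  -- the structured coefficient-of-z^3 identity
  have hE3 : 2 * (C (R := R) c) * (g*g*g*g*g) + 2 * (d⁄dX R g) =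
      -(8 * (C (R := R) (coeff (R := R) 3 g)) * ((d⁄dX R g) * (g * g)))
      + (d⁄dX R g) * (-(2 * (C (R := R) a) * (g * g)) + 12 * (C (R := R) (coeff (R := R) 3 g)) * (g * g)
          - (d⁄dX R (d⁄dX R g)) * g + 2 * ((d⁄dX R g) * (d⁄dX R g)))
      - 2 * (coeff (R := R⟦X⟧) 2 (Rigidity.e (substMv
          (MvPowerSeries.X 0 + MvPowerSeries.X 1 : MvPowerSeries (Fin 2) R) g)))
          * ((d⁄dX R g) * g)
      + 2 * (coeff (R := R⟦X⟧) 3 (Rigidity.e (substMv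
          (MvPowerSeries.X 0 + MvPowerSeries.X 1 : MvPowerSeries (Fin 2) R) g)))
          * (g * g) := by
    linear_combination h3
  -- parity facts
  have hgO : IsOddS g := hodd
  have hEg : IsEvenS (d⁄dX R g) := IsOddS.deriv hgO
  have hOq : IsOddS (d⁄dX R (d⁄dX R g)) := IsEvenS.deriv hEg
  have ht2O : IsOddS (coeff (R := R⟦X⟧) 2 (Rigidity.e (substMv
      (MvPowerSeries.X 0 + MvPowerSeries.X 1 : MvPowerSeries (Fin 2) R) g))) :=
    tau2_odd g hodd
  have ht3E : IsEvenS (coeff (R := R⟦X⟧) 3 (Rigidity.e (substMv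
      (MvPowerSeries.X 0 + MvPowerSeries.X 1 : MvPowerSeries (Fin 2) R) g))) :=
    tau3_even g hodd
  have hgg : IsEvenS (g * g) := IsOddS.mul_odd hgO hgO
  -- the right-hand side of hE3 is an even power series
  have hRHSeven : IsEvenS (-(8 * (C (R := R) (coeff (R := R) 3 g)) * ((d⁄dX R g) * (g * g)))
      + (d⁄dX R g) * (-(2 * (C (R := R) a) * (g * g)) + 12 * (C (R := R) (coeff (R := R) 3 g)) * (g * g)
          - (d⁄dX R (d⁄dX R g)) * g + 2 * ((d⁄dX R g) * (d⁄dX R g)))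
      - 2 * (coeff (R := R⟦X⟧) 2 (Rigidity.e (substMv
          (MvPowerSeries.X 0 + MvPowerSeries.X 1 : MvPowerSeries (Fin 2) R) g)))
          * ((d⁄dX R g) * g)
      + 2 * (coeff (R := R⟦X⟧) 3 (Rigidity.e (substMv
          (MvPowerSeries.X 0 + MvPowerSeries.X 1 : MvPowerSeries (Fin 2) R) g)))
          * (g * g)) := by
    refine IsEvenS.add (IsEvenS.sub (IsEvenS.add (IsEvenS.neg ?_) ?_) ?_) ?_
    · exact ((IsEvenS_ofNat 8).mul (IsEvenS_C _)).mul (hEg.mul hgg)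
    · refine hEg.mul (IsEvenS.add (IsEvenS.sub (IsEvenS.add (IsEvenS.neg ?_) ?_) ?_) ?_)
      · exact (IsEvenS_two.mul (IsEvenS_C _)).mul hgg
      · exact ((IsEvenS_ofNat 12).mul (IsEvenS_C _)).mul hgg
      · exact IsOddS.mul_odd hOq hgO
      · exact IsEvenS_two.mul (hEg.mul hEg)
    · exact (IsEvenS_two.mul_odd ht2O).mul_odd (hEg.mul_odd hgO)
    · exact (IsEvenS_two.mul ht3E).mul hgg
  -- extract the coefficient of X^5 to deduce c = 0
  have hc : c = 0 := by
    have hc5 := congrArg (coeff (R := R) 5) hE3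
    rw [map_add, hRHSeven 5 ⟨2, rfl⟩] at hc5
    rw [show (2:R⟦X⟧) * C (R := R) c * (g*g*g*g*g) = C (R := R) (2*c) * g^5 by
      rw [map_mul (C (R := R)) 2 c, hC2]; ring] at hc5
    rw [PowerSeries.coeff_C_mul, coeff_pow_self hg0, h1, one_pow, mul_one] at hc5
    rw [show (2:R⟦X⟧) * (d⁄dX R g) = C (R := R) 2 * (d⁄dX R g) by rw [hC2],
      PowerSeries.coeff_C_mul, hEg 5 ⟨2, rfl⟩, mul_zero, add_zero] at hc5
    refine int_cancel (z := 2) (by norm_num) ?_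
    push_cast
    linear_combination hc5
  have hCc : (C (R := R) c : R⟦X⟧) = 0 := by rw [hc, map_zero]
  have hCa : (C (R := R) a : R⟦X⟧) = 3 * C (R := R) (coeff (R := R) 3 g) := by
    rw [ha, map_mul (C (R := R)) 3 (coeff (R := R) 3 g), hC3]
  have htwo : d⁄dX R (2 : R⟦X⟧) = 0 := by
    rw [← hC2, derivative_C]
  -- the auxiliary series D1
  have hkey3 : (d⁄dX R ((d⁄dX R (d⁄dX R g)) * g - 2*((d⁄dX R g)*(d⁄dX R g)) + 2
        + 2*(C (R := R) a)*(g*g))) * g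
      = C (R := R) ((3:ℕ):R) * ((d⁄dX R g) * ((d⁄dX R (d⁄dX R g)) * g
        - 2*((d⁄dX R g)*(d⁄dX R g)) + 2 + 2*(C (R := R) a)*(g*g))) := by
    rw [Nat.cast_ofNat, map_ofNat]
    simp only [map_add, map_sub, Derivation.leibniz, smul_eq_mul, derivative_C, htwo,
      mul_zero, zero_mul, add_zero, zero_add]
    linear_combination (-3 : R⟦X⟧) * hE3 + (4*(d⁄dX R g)*(g*g)) * hCa
      + (3*(d⁄dX R g)*g) * (tau_coeff2 g) + (-(g*g)) * (tau_coeff3 g)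
      + (6*(g*g*g*g*g)) * hCc
  have hD13 : coeff (R := R) 3 ((d⁄dX R (d⁄dX R g)) * g - 2*((d⁄dX R g)*(d⁄dX R g)) + 2
      + 2*(C (R := R) a)*(g*g)) = 0 := by
    simp only [map_add, map_sub, coeff3_mul, coeff2_mul, coeff1_mul, coeff0_mul,
      coeff_two, PowerSeries.coeff_C, hg0, h1, hg2', hdg0, hdg1, hdg2, hdg3,
      hq0, hq1, hq2]
    norm_num
  have hD1zero := key_vanish 3 g _ hg0 h1 hD13 hkey3
  have hD2 : (d⁄dX R (d⁄dX R g)) * g = 2*((d⁄dX R g)*(d⁄dX R g)) - 2 - 2*(C (R := R) a)*(g*g) := by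
    linear_combination hD1zero
  -- the quadratic relation
  set ε := coeff (R := R) 4 ((d⁄dX R g)*(d⁄dX R g) - 1 - 2*(C (R := R) a)*(g*g)) with hεdef
  have h4g : coeff (R := R) 4 ((g:R⟦X⟧)*g*g*g) = 1 := by
    rw [show (g:R⟦X⟧)*g*g*g = g^4 by ring, coeff_pow_self hg0, h1, one_pow]
  have hF24 : coeff (R := R) 4 ((d⁄dX R g)*(d⁄dX R g) - 1 - 2*(C (R := R) a)*(g*g)
      - (C (R := R) ε)*(g*g*g*g)) = 0 := by
    rw [map_sub, PowerSeries.coeff_C_mul, h4g, mul_one, ← hεdef, sub_self]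
  have hkey4 : (d⁄dX R ((d⁄dX R g)*(d⁄dX R g) - 1 - 2*(C (R := R) a)*(g*g)
        - (C (R := R) ε)*(g*g*g*g))) * g
      = C (R := R) ((4:ℕ):R) * ((d⁄dX R g) * ((d⁄dX R g)*(d⁄dX R g) - 1 - 2*(C (R := R) a)*(g*g)
        - (C (R := R) ε)*(g*g*g*g))) := by
    rw [Nat.cast_ofNat, map_ofNat]
    simp only [map_add, map_sub, Derivation.leibniz, smul_eq_mul, derivative_C, htwo,
      Derivation.map_one_eq_zero, mul_zero, zero_mul, add_zero, zero_add, sub_zero]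
    linear_combination (2*(d⁄dX R g)) * hD2
  have hF2zero := key_vanish 4 g _ hg0 h1 hF24 hkey4
  exact ⟨hc, ε, by linear_combination hF2zero⟩
end

section
/- Let R be a commutative ℚ-algebra, c ∈ R, and let g ∈ R⟦X⟧ be an odd formal power series with coefficient 1 in degree 1. Set a = 3·(coefficient of X³ in g). Suppose that in R⟦y,z⟧ the identity 2c·g(y+z)²·g(y)³·g(z)³ + 2·g'(z)·g(y)³ + 2·g'(y)·g(z)³ = g(y+z)·( −g''(z)·g(y)²·g(z) − g''(y)·g(z)²·g(y) + 2·g'(z)²·g(y)² + 2·g'(y)²·g(z)² − 2·g'(y)·g'(z)·g(y)·g(z) ) holds (notation as via substitution of y, z, y+z into g and its derivatives). Then, extracting the coefficient of z³, the one-variable identity 6c·g⁵ + 6·g' = −6·g''·g'·g − 2a·g²·g' + 6·(g')³ + g'''·g² holds in R⟦X⟧. -/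
open PowerSeries

namespace Statement1Aux

open Finsupp

variable {R : Type*} [CommRing R]

/-- The coefficient of `z^k` in a two-variable power series, as a power series in `y`. -/
noncomputable def tau (k : ℕ) (h : MvPowerSeries (Fin 2) R) : PowerSeries R :=
  PowerSeries.mk fun n => MvPowerSeries.coeff (R := R) (Finsupp.single 0 n + Finsupp.single 1 k) h

lemma coeff_tau (k n : ℕ) (h : MvPowerSeries (Fin 2) R) :
    PowerSeries.coeff (R := R) n (tau k h) =
      MvPowerSeries.coeff (R := R) (single 0 n + single 1 k) h := PowerSeries.coeff_mk _ _

lemma fin2_decomp (u : Fin 2 →₀ ℕ) : Finsupp.single 0 (u 0) + Finsupp.single 1 (u 1) = u := by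
  ext i; fin_cases i <;> simp

lemma single_add_single_eq_iff {i j n k : ℕ} :
    single (0 : Fin 2) i + single 1 j = single 0 n + single 1 k ↔ i = n ∧ j = k := by
  constructor
  · intro h
    have h0 := DFunLike.congr_fun h 0
    have h1 := DFunLike.congr_fun h 1
    simp [Finsupp.single_apply] at h0 h1
    exact ⟨h0, h1⟩
  · rintro ⟨rfl, rfl⟩; rfl

lemma tau_mul (k : ℕ) (A B : MvPowerSeries (Fin 2) R) :
    tau k (A * B) = ∑ p ∈ Finset.HasAntidiagonal.antidiagonal k, tau p.1 A * tau p.2 B := by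
  ext n
  rw [coeff_tau, MvPowerSeries.coeff_mul, map_sum]
  have : ∀ p ∈ Finset.HasAntidiagonal.antidiagonal k, PowerSeries.coeff (R := R) n (tau p.1 A * tau p.2 B)
      = ∑ q ∈ Finset.HasAntidiagonal.antidiagonal n,
          MvPowerSeries.coeff (R := R) (single 0 q.1 + single 1 p.1) A *
          MvPowerSeries.coeff (R := R) (single 0 q.2 + single 1 p.2) B := by
    intro p _
    rw [PowerSeries.coeff_mul]
    exact Finset.sum_congr rfl fun q _ => by rw [coeff_tau, coeff_tau]
  rw [Finset.sum_congr rfl this, ← Finset.sum_product']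
  refine Finset.sum_nbij' (fun u => ((u.1 1, u.2 1), (u.1 0, u.2 0)))
    (fun x => (single 0 x.2.1 + single 1 x.1.1, single 0 x.2.2 + single 1 x.1.2))
    ?_ ?_ ?_ ?_ ?_
  · intro u hu
    rw [Finset.HasAntidiagonal.mem_antidiagonal] at hu
    have h0 := DFunLike.congr_fun hu 0
    have h1 := DFunLike.congr_fun hu 1
    simp [Finsupp.single_apply] at h0 h1
    simp [Finset.mem_product, Finset.HasAntidiagonal.mem_antidiagonal, h0, h1]
  · intro x hx
    simp only [Finset.mem_product, Finset.HasAntidiagonal.mem_antidiagonal] at hx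
    rw [Finset.HasAntidiagonal.mem_antidiagonal]
    rw [add_add_add_comm, ← Finsupp.single_add, ← Finsupp.single_add, hx.1, hx.2]
  · intro u hu
    simp [fin2_decomp]
  · intro x hx
    simp
  · intro u hu
    simp only [fin2_decomp]

lemma tau_add (k : ℕ) (A B : MvPowerSeries (Fin 2) R) :
    tau k (A + B) = tau k A + tau k B := by
  ext n; simp [coeff_tau]

lemma tau_neg (k : ℕ) (A : MvPowerSeries (Fin 2) R) : tau k (-A) = -(tau k A) := by
  ext n; simp [coeff_tau]

lemma tau_sub (k : ℕ) (A B : MvPowerSeries (Fin 2) R) :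
    tau k (A - B) = tau k A - tau k B := by
  ext n; simp [coeff_tau]

lemma antidiagonal_three :
    Finset.HasAntidiagonal.antidiagonal (3 : ℕ) = {(0,3), (1,2), (2,1), (3,0)} := by decide

lemma antidiagonal_two :
    Finset.HasAntidiagonal.antidiagonal (2 : ℕ) = {(0,2), (1,1), (2,0)} := by decide

lemma antidiagonal_one :
    Finset.HasAntidiagonal.antidiagonal (1 : ℕ) = {(0,1), (1,0)} := by decide

lemma antidiagonal_zero' :
    Finset.HasAntidiagonal.antidiagonal (0 : ℕ) = {(0,0)} := by decide

lemma tau_mul_zero (A B : MvPowerSeries (Fin 2) R) :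
    tau 0 (A * B) = tau 0 A * tau 0 B := by
  rw [tau_mul, antidiagonal_zero']; simp

lemma tau_mul_one (A B : MvPowerSeries (Fin 2) R) :
    tau 1 (A * B) = tau 0 A * tau 1 B + tau 1 A * tau 0 B := by
  rw [tau_mul, antidiagonal_one]; simp [Finset.sum_insert]

lemma tau_mul_two (A B : MvPowerSeries (Fin 2) R) :
    tau 2 (A * B) = tau 0 A * tau 2 B + tau 1 A * tau 1 B + tau 2 A * tau 0 B := by
  rw [tau_mul, antidiagonal_two]
  rw [Finset.sum_insert (by decide), Finset.sum_insert (by decide), Finset.sum_singleton]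
  ring

lemma tau_mul_three (A B : MvPowerSeries (Fin 2) R) :
    tau 3 (A * B) = tau 0 A * tau 3 B + tau 1 A * tau 2 B + tau 2 A * tau 1 B
      + tau 3 A * tau 0 B := by
  rw [tau_mul, antidiagonal_three]
  rw [Finset.sum_insert (by decide), Finset.sum_insert (by decide),
    Finset.sum_insert (by decide), Finset.sum_singleton]
  ring

lemma coeff_substMv (h : MvPowerSeries (Fin 2) R) (g : PowerSeries R) (d : Fin 2 →₀ ℕ) :
    MvPowerSeries.coeff (R := R) d (substMv h g) =
      ∑ k ∈ Finset.range ((d.sum fun _ n => n) + 1),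
        PowerSeries.coeff (R := R) k g * MvPowerSeries.coeff (R := R) d (h ^ k) := rfl

lemma sum_single_add_single (n k : ℕ) :
    ((single (0 : Fin 2) n + single 1 k).sum fun _ m => m) = n + k := by
  classical
  rw [Finsupp.sum_add_index (by simp) (by simp)]
  simp [Finsupp.sum_single_index]

lemma tau_substY (k : ℕ) (f : PowerSeries R) :
    tau k (substMv (MvPowerSeries.X 0) f) = if k = 0 then f else 0 := by
  ext n
  rw [coeff_tau, coeff_substMv, sum_single_add_single]
  have key : ∀ m : ℕ, MvPowerSeries.coeff (R := R) (single 0 n + single 1 k)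
      ((MvPowerSeries.X (0 : Fin 2) : MvPowerSeries (Fin 2) R) ^ m)
      = if n = m ∧ k = 0 then 1 else 0 := by
    intro m
    rw [MvPowerSeries.X_pow_eq, MvPowerSeries.coeff_monomial]
    congr 1
    rw [show single (0 : Fin 2) m = single 0 m + single 1 0 by simp]
    rw [eq_iff_iff, single_add_single_eq_iff]
  simp only [key]
  rcases eq_or_ne k 0 with rfl | hk
  · simp only [and_true, mul_ite, mul_one, mul_zero]
    rw [Finset.sum_ite_eq (Finset.range (n + 0 + 1)) n (fun m => PowerSeries.coeff (R := R) m f)]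
    simp
  · simp [hk]

lemma tau_substZ (k : ℕ) (f : PowerSeries R) :
    tau k (substMv (MvPowerSeries.X 1) f) = PowerSeries.C (R := R) (PowerSeries.coeff (R := R) k f) := by
  ext n
  rw [coeff_tau, coeff_substMv, sum_single_add_single]
  have key : ∀ m : ℕ, MvPowerSeries.coeff (R := R) (single 0 n + single 1 k)
      ((MvPowerSeries.X (1 : Fin 2) : MvPowerSeries (Fin 2) R) ^ m)
      = if n = 0 ∧ k = m then 1 else 0 := by
    intro m
    rw [MvPowerSeries.X_pow_eq, MvPowerSeries.coeff_monomial]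
    congr 1
    rw [show single (1 : Fin 2) m = single 0 0 + single 1 m by simp]
    rw [eq_iff_iff, single_add_single_eq_iff]
  simp only [key]
  rcases eq_or_ne n 0 with rfl | hn
  · simp only [true_and, mul_ite, mul_one, mul_zero]
    rw [Finset.sum_ite_eq (Finset.range (0 + k + 1)) k (fun m => PowerSeries.coeff (R := R) m f)]
    simp [PowerSeries.coeff_C]
  · simp [hn, PowerSeries.coeff_C]

lemma coeff_YZ_pow (n k m : ℕ) :
    MvPowerSeries.coeff (R := R) (single 0 n + single 1 k)
      ((MvPowerSeries.X 0 + MvPowerSeries.X 1 : MvPowerSeries (Fin 2) R) ^ m)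
      = if n + k = m then (m.choose n : R) else 0 := by
  rw [add_pow, map_sum]
  have key : ∀ i ∈ Finset.range (m + 1),
      MvPowerSeries.coeff (R := R) (single 0 n + single 1 k)
        ((MvPowerSeries.X (0 : Fin 2) : MvPowerSeries (Fin 2) R) ^ i *
          MvPowerSeries.X 1 ^ (m - i) * (m.choose i : MvPowerSeries (Fin 2) R))
      = if n = i ∧ k = m - i then (m.choose i : R) else 0 := by
    intro i hi
    rw [MvPowerSeries.X_pow_eq, MvPowerSeries.X_pow_eq, MvPowerSeries.monomial_mul_monomial,
      one_mul, ← map_natCast (MvPowerSeries.C (σ := Fin 2) (R := R)) (m.choose i),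
      MvPowerSeries.coeff_mul_C, MvPowerSeries.coeff_monomial]
    by_cases hc : single (0 : Fin 2) n + single 1 k = single 0 i + single 1 (m - i)
    · rw [if_pos hc, one_mul, if_pos (single_add_single_eq_iff.mp hc)]
    · rw [if_neg hc, zero_mul, if_neg fun hh => hc (by rw [hh.1, hh.2])]
  rw [Finset.sum_congr rfl key]
  by_cases hm : n + k = m
  · rw [if_pos hm]
    rw [Finset.sum_eq_single n]
    · rw [if_pos ⟨rfl, by omega⟩]
    · intro i _ hne; rw [if_neg fun hh => hne hh.1.symm]
    · intro h; exact absurd (Finset.mem_range.mpr (by omega)) h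
  · rw [if_neg hm, Finset.sum_eq_zero]
    intro i hi
    rw [if_neg]
    rintro ⟨rfl, rfl⟩
    simp only [Finset.mem_range] at hi; omega

lemma tau_substYZ (k : ℕ) (f : PowerSeries R) :
    tau k (substMv (MvPowerSeries.X 0 + MvPowerSeries.X 1) f) =
      PowerSeries.mk fun n => PowerSeries.coeff (R := R) (n + k) f * ((n + k).choose n : R) := by
  ext n
  rw [coeff_tau, coeff_substMv, sum_single_add_single, PowerSeries.coeff_mk]
  simp only [coeff_YZ_pow, mul_ite, mul_zero]
  rw [Finset.sum_ite_eq (Finset.range (n + k + 1)) (n + k)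
    (fun m => PowerSeries.coeff (R := R) m f * (m.choose n : R))]
  simp

lemma tau_substYZ_zero (f : PowerSeries R) :
    tau 0 (substMv (MvPowerSeries.X 0 + MvPowerSeries.X 1) f) = f := by
  rw [tau_substYZ]; ext n; simp

lemma tau_substYZ_one (f : PowerSeries R) :
    tau 1 (substMv (MvPowerSeries.X 0 + MvPowerSeries.X 1) f) = d⁄dX R f := by
  rw [tau_substYZ]; ext n
  simp [PowerSeries.coeff_derivative, Nat.choose_succ_self_right]

lemma choose_two_mul (n : ℕ) : 2 * (n + 2).choose 2 = (n + 2) * (n + 1) := by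
  induction n with
  | zero => rfl
  | succ n ih =>
    have h : (n + 1 + 2).choose 2 = (n + 2) + (n + 2).choose 2 := by
      rw [show n + 1 + 2 = (n + 2) + 1 from rfl, show (2 : ℕ) = 1 + 1 from rfl,
        Nat.choose_succ_succ, Nat.choose_one_right]
    rw [h, Nat.mul_add, ih]; ring

lemma choose_three_mul (n : ℕ) : 6 * (n + 3).choose 3 = (n + 3) * (n + 2) * (n + 1) := by
  induction n with
  | zero => rfl
  | succ n ih =>
    have h : (n + 1 + 3).choose 3 = (n + 3).choose 2 + (n + 3).choose 3 := by
      rw [show n + 1 + 3 = (n + 3) + 1 from rfl, show (3 : ℕ) = 2 + 1 from rfl,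
        Nat.choose_succ_succ]
    have h2 : 2 * (n + 3).choose 2 = (n + 3) * (n + 2) := by
      have := choose_two_mul (n + 1)
      convert this using 3 <;> omega
    rw [h, Nat.mul_add, ih, show (6 : ℕ) = 3 * 2 from rfl, Nat.mul_assoc, h2]
    ring

lemma choose_n2_n (n : ℕ) : (n + 2).choose n = (n + 2).choose 2 := by
  rw [← Nat.choose_symm (by omega : 2 ≤ n + 2), show n + 2 - 2 = n by omega]

lemma choose_n3_n (n : ℕ) : (n + 3).choose n = (n + 3).choose 3 := by
  rw [← Nat.choose_symm (by omega : 3 ≤ n + 3), show n + 3 - 3 = n by omega]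

section Rat
variable [Algebra ℚ R]

lemma tau_substYZ_two (f : PowerSeries R) :
    tau 2 (substMv (MvPowerSeries.X 0 + MvPowerSeries.X 1) f) =
      PowerSeries.C (R := R) (algebraMap ℚ R 2⁻¹) * d⁄dX R (d⁄dX R f) := by
  rw [tau_substYZ]; ext n
  rw [PowerSeries.coeff_mk, PowerSeries.coeff_C_mul, PowerSeries.coeff_derivative,
    PowerSeries.coeff_derivative]
  have hq : (2 : R) * algebraMap ℚ R 2⁻¹ = 1 := by
    rw [show (2 : R) = algebraMap ℚ R 2 from (map_ofNat (algebraMap ℚ R) 2).symm, ← map_mul]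
    norm_num
  have key : ((n + 2).choose n * 2 : ℕ) = (n + 2) * (n + 1) := by
    rw [choose_n2_n, Nat.mul_comm, choose_two_mul]
  have keyR : (((n + 2).choose n : ℕ) : R) * 2 = ((n : R) + 2) * ((n : R) + 1) := by
    exact_mod_cast congrArg (Nat.cast (R := R)) key
  set q := algebraMap ℚ R 2⁻¹
  set f2 := PowerSeries.coeff (R := R) (n + 1 + 1) f
  push_cast
  linear_combination q * f2 * keyR - f2 * (((n + 2).choose n : ℕ) : R) * hq

lemma tau_substYZ_three (f : PowerSeries R) :
    tau 3 (substMv (MvPowerSeries.X 0 + MvPowerSeries.X 1) f) =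
      PowerSeries.C (R := R) (algebraMap ℚ R 6⁻¹) * d⁄dX R (d⁄dX R (d⁄dX R f)) := by
  rw [tau_substYZ]; ext n
  rw [PowerSeries.coeff_mk, PowerSeries.coeff_C_mul, PowerSeries.coeff_derivative,
    PowerSeries.coeff_derivative, PowerSeries.coeff_derivative]
  have hq : (6 : R) * algebraMap ℚ R 6⁻¹ = 1 := by
    rw [show (6 : R) = algebraMap ℚ R 6 from (map_ofNat (algebraMap ℚ R) 6).symm, ← map_mul]
    norm_num
  have key : ((n + 3).choose n * 6 : ℕ) = (n + 3) * (n + 2) * (n + 1) := by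
    rw [choose_n3_n, Nat.mul_comm, choose_three_mul]
  have keyR : (((n + 3).choose n : ℕ) : R) * 6
      = ((n : R) + 3) * ((n : R) + 2) * ((n : R) + 1) := by
    exact_mod_cast congrArg (Nat.cast (R := R)) key
  set q := algebraMap ℚ R 6⁻¹
  set f3 := PowerSeries.coeff (R := R) (n + 1 + 1 + 1) f
  push_cast
  linear_combination q * f3 * keyR - f3 * (((n + 3).choose n : ℕ) : R) * hq

end Rat

lemma tau_C (k : ℕ) (r : R) :
    tau k (MvPowerSeries.C (σ := Fin 2) (R := R) r) = if k = 0 then PowerSeries.C (R := R) r else 0 := by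
  ext n
  rw [coeff_tau, MvPowerSeries.coeff_C]
  have : (single (0 : Fin 2) n + single 1 k = 0) ↔ (n = 0 ∧ k = 0) := by
    rw [show (0 : Fin 2 →₀ ℕ) = single 0 0 + single 1 0 by simp]
    exact single_add_single_eq_iff
  rcases eq_or_ne k 0 with rfl | hk
  · rcases eq_or_ne n 0 with rfl | hn
    · simp [this, PowerSeries.coeff_C]
    · simp [this, hn, PowerSeries.coeff_C]
  · have : ¬(single (0 : Fin 2) n + single 1 k = 0) := fun h => hk (this.mp h).2
    simp [this, hk]

lemma tau_one' (k : ℕ) :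
    tau k (1 : MvPowerSeries (Fin 2) R) = if k = 0 then 1 else 0 := by
  have := tau_C (R := R) k 1
  rwa [map_one, map_one] at this

end Statement1Aux

/-- Extracting the coefficient of `z³` in the two-variable rigidity identity yields the
one-variable differential identity `6c·g⁵ + 6·g' = −6·g''·g'·g − 2a·g²·g' + 6·(g')³ + g'''·g²`. -/
theorem statement1 {R : Type*} [CommRing R] [Algebra ℚ R] (c : R) (g : PowerSeries R)
    (hodd : ∀ n, Even n → PowerSeries.coeff (R := R) n g = 0)
    (h1 : PowerSeries.coeff (R := R) 1 g = 1)
    (a : R) (ha : a = 3 * PowerSeries.coeff (R := R) 3 g)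
    (heq :
      letI Y : MvPowerSeries (Fin 2) R := MvPowerSeries.X 0
      letI Z : MvPowerSeries (Fin 2) R := MvPowerSeries.X 1
      2 * MvPowerSeries.C (σ := Fin 2) (R := R) c * (substMv (Y + Z) g) ^ 2 * (substMv Y g) ^ 3
            * (substMv Z g) ^ 3
          + 2 * substMv Z (d⁄dX R g) * (substMv Y g) ^ 3
          + 2 * substMv Y (d⁄dX R g) * (substMv Z g) ^ 3
        = substMv (Y + Z) g *
            (-(substMv Z (d⁄dX R (d⁄dX R g)) * (substMv Y g) ^ 2 * substMv Z g)
              - substMv Y (d⁄dX R (d⁄dX R g)) * (substMv Z g) ^ 2 * substMv Y g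
              + 2 * (substMv Z (d⁄dX R g)) ^ 2 * (substMv Y g) ^ 2
              + 2 * (substMv Y (d⁄dX R g)) ^ 2 * (substMv Z g) ^ 2
              - 2 * substMv Y (d⁄dX R g) * substMv Z (d⁄dX R g)
                  * substMv Y g * substMv Z g)) :
    6 * PowerSeries.C (R := R) c * g ^ 5 + 6 * d⁄dX R g
      = -(6 * d⁄dX R (d⁄dX R g) * d⁄dX R g * g)
        - 2 * PowerSeries.C (R := R) a * g ^ 2 * d⁄dX R g
        + 6 * (d⁄dX R g) ^ 3
        + d⁄dX R (d⁄dX R (d⁄dX R g)) * g ^ 2 := by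
  classical
  open Statement1Aux in
  have H := congrArg (tau 3) heq
  have p2 : ∀ x : MvPowerSeries (Fin 2) R, x ^ 2 = x * x := fun x => sq x
  have p3 : ∀ x : MvPowerSeries (Fin 2) R, x ^ 3 = x * x * x := fun x => by ring
  have htwo : (2 : MvPowerSeries (Fin 2) R) = MvPowerSeries.C (σ := Fin 2) (R := R) 2 :=
    (map_ofNat _ 2).symm
  have tau_two : ∀ k, tau k (2 : MvPowerSeries (Fin 2) R)
      = if k = 0 then (2 : PowerSeries R) else 0 := by
    intro k
    rw [htwo, tau_C]
    split
    · exact map_ofNat _ 2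
    · rfl
  -- coefficient facts
  have hg0 : PowerSeries.coeff (R := R) 0 g = 0 := hodd 0 (by decide)
  have hg2 : PowerSeries.coeff (R := R) 2 g = 0 := hodd 2 (by decide)
  have hg4 : PowerSeries.coeff (R := R) 4 g = 0 := hodd 4 (by decide)
  simp only [p2, p3] at H
  simp only [tau_mul_three, tau_mul_two, tau_mul_one, tau_mul_zero, tau_add, tau_sub, tau_neg,
    tau_substY, tau_substZ, tau_substYZ_zero, tau_substYZ_one, tau_substYZ_two,
    tau_substYZ_three, tau_C, tau_two, PowerSeries.coeff_derivative,
    if_true, if_false, reduceIte, hg0, hg2, hg4, h1, map_zero, map_one, map_mul, map_ofNat,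
    Nat.cast_zero, Nat.cast_one, Nat.cast_ofNat, Nat.reduceAdd, zero_add,
    mul_zero, zero_mul, add_zero, mul_one, one_mul, sub_zero, zero_sub, neg_zero,
    neg_neg, mul_neg, neg_mul] at H
  norm_num at H
  simp only [Nat.cast_ofNat, map_ofNat] at H
  rw [ha, map_mul, map_ofNat]
  have hq2 : (algebraMap ℚ (PowerSeries R)) (1/2) * 2 = 1 := by
    rw [show (2 : PowerSeries R) = algebraMap ℚ (PowerSeries R) 2 from
      (map_ofNat (algebraMap ℚ (PowerSeries R)) 2).symm, ← map_mul]
    norm_num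
  have hq6 : (algebraMap ℚ (PowerSeries R)) (1/6) * 6 = 1 := by
    rw [show (6 : PowerSeries R) = algebraMap ℚ (PowerSeries R) 6 from
      (map_ofNat (algebraMap ℚ (PowerSeries R)) 6).symm, ← map_mul]
    norm_num
  linear_combination (norm := ring_nf)
    3 * H - 3 * (d⁄dX R (d⁄dX R g)) * (d⁄dX R g) * g * hq2
    + (d⁄dX R (d⁄dX R (d⁄dX R g))) * g ^ 2 * hq6
end

section
/- Let R be a commutative ℚ-algebra, c, a ∈ R, and let g ∈ R⟦X⟧ be an odd formal power series with coefficient 1 in degree 1. If 6c·g⁵ + 6·g' = −6·g''·g'·g − 2a·g²·g' + 6·(g')³ + g'''·g² holds in R⟦X⟧, then c = 0. -/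
open PowerSeries

section Aux

variable {R : Type*} [CommRing R]

private def EvenS (f : PowerSeries R) : Prop := ∀ n, Odd n → PowerSeries.coeff n f = 0
private def OddS (f : PowerSeries R) : Prop := ∀ n, Even n → PowerSeries.coeff n f = 0

private lemma coeff_mul_zero (f h : PowerSeries R) (n : ℕ)
    (H : ∀ i j : ℕ, i + j = n → coeff i f = 0 ∨ coeff j h = 0) :
    coeff n (f * h) = 0 := by
  rw [PowerSeries.coeff_mul]
  apply Finset.sum_eq_zero
  intro p hp
  rw [Finset.HasAntidiagonal.mem_antidiagonal] at hp
  rcases H p.1 p.2 hp with h' | h' <;> simp [h']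

private lemma evenS_mul {f h : PowerSeries R} (hf : EvenS f) (hh : EvenS h) :
    EvenS (f * h) := by
  intro n hn
  apply coeff_mul_zero
  intro i j hij
  rcases Nat.even_or_odd i with hi | hi
  · right
    refine hh j ?_
    rw [Nat.odd_iff] at hn ⊢; rw [Nat.even_iff] at hi; omega
  · left; exact hf i hi

private lemma evenS_of_oddS_mul {f h : PowerSeries R} (hf : OddS f) (hh : OddS h) :
    EvenS (f * h) := by
  intro n hn
  apply coeff_mul_zero
  intro i j hij
  rcases Nat.even_or_odd i with hi | hi
  · left; exact hf i hi
  · right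
    refine hh j ?_
    rw [Nat.odd_iff] at hn hi; rw [Nat.even_iff]; omega

private lemma oddS_mul {f h : PowerSeries R} (hf : EvenS f) (hh : OddS h) :
    OddS (f * h) := by
  intro n hn
  apply coeff_mul_zero
  intro i j hij
  rcases Nat.even_or_odd i with hi | hi
  · right
    refine hh j ?_
    rw [Nat.even_iff] at hn hi ⊢; omega
  · left; exact hf i hi

private lemma oddS_mul' {f h : PowerSeries R} (hf : OddS f) (hh : EvenS h) :
    OddS (f * h) := by
  rw [mul_comm]; exact oddS_mul hh hf

private lemma evenS_C (r : R) : EvenS (PowerSeries.C r) := by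
  intro n hn
  rw [PowerSeries.coeff_C, if_neg (by rintro rfl; simp [Nat.odd_iff] at hn)]

private lemma evenS_ofNat (k : ℕ) : EvenS ((k : PowerSeries R)) := by
  have : ((k : PowerSeries R)) = PowerSeries.C (k : R) := by simp
  rw [this]; exact evenS_C _

private lemma evenS_deriv {f : PowerSeries R} (hf : OddS f) : EvenS (d⁄dX R f) := by
  intro n hn
  have : Even (n + 1) := by rw [Nat.odd_iff] at hn; rw [Nat.even_iff]; omega
  rw [PowerSeries.coeff_derivative]
  simp [hf (n + 1) this]

private lemma oddS_deriv {f : PowerSeries R} (hf : EvenS f) : OddS (d⁄dX R f) := by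
  intro n hn
  have : Odd (n + 1) := by rw [Nat.even_iff] at hn; rw [Nat.odd_iff]; omega
  rw [PowerSeries.coeff_derivative]
  simp [hf (n + 1) this]

end Aux

/-- If `g` is an odd power series with linear coefficient `1` over a commutative
`ℚ`-algebra and `6c·g⁵ + 6·g' = −6·g''·g'·g − 2a·g²·g' + 6·(g')³ + g'''·g²`
holds in `R⟦X⟧`, then `c = 0`. -/
theorem statement2 {R : Type*} [CommRing R] [Algebra ℚ R] (c a : R) (g : PowerSeries R)
    (hodd : ∀ n, Even n → PowerSeries.coeff n g = 0)
    (h1 : PowerSeries.coeff 1 g = 1)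
    (heq : 6 * PowerSeries.C c * g ^ 5 + 6 * d⁄dX R g
      = -(6 * d⁄dX R (d⁄dX R g) * d⁄dX R g * g)
        - 2 * PowerSeries.C a * g ^ 2 * d⁄dX R g
        + 6 * (d⁄dX R g) ^ 3
        + d⁄dX R (d⁄dX R (d⁄dX R g)) * g ^ 2) :
    c = 0 := by
  have hg : OddS g := hodd
  have hg' : EvenS (d⁄dX R g) := evenS_deriv hg
  have hg'' : OddS (d⁄dX R (d⁄dX R g)) := oddS_deriv hg'
  have hg''' : EvenS (d⁄dX R (d⁄dX R (d⁄dX R g))) := evenS_deriv hg''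
  have hg2 : EvenS (g ^ 2) := by rw [sq]; exact evenS_of_oddS_mul hg hg
  have h6 : EvenS ((6 : PowerSeries R)) := evenS_ofNat 6
  have h2 : EvenS ((2 : PowerSeries R)) := evenS_ofNat 2
  have hodd5 : Odd 5 := ⟨2, rfl⟩
  -- coefficient 5 of g ^ 5 is 1
  obtain ⟨h, hh⟩ : (PowerSeries.X : PowerSeries R) ∣ g :=
    PowerSeries.X_dvd_iff.mpr (by simpa using hodd 0 Even.zero)
  have hh0 : constantCoeff h = 1 := by
    have h1' := h1
    rw [hh, show (1:ℕ) = 0 + 1 from rfl, PowerSeries.coeff_succ_X_mul,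
      PowerSeries.coeff_zero_eq_constantCoeff] at h1'
    exact h1'
  have hc5 : PowerSeries.coeff 5 (g ^ 5) = 1 := by
    have key := PowerSeries.coeff_X_pow_mul (h ^ 5) 5 0
    norm_num at key
    rw [hh, mul_pow, key, hh0, one_pow]
  -- coefficient 5 of the left-hand side is 6 * c
  have hL : PowerSeries.coeff 5 (6 * PowerSeries.C c * g ^ 5 + 6 * d⁄dX R g) = 6 * c := by
    rw [map_add, evenS_mul h6 hg' 5 hodd5, add_zero,
      show (6 : PowerSeries R) * PowerSeries.C c = PowerSeries.C (6 * c) by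
        rw [map_mul, map_ofNat],
      PowerSeries.coeff_C_mul, hc5, mul_one]
  -- coefficient 5 of the right-hand side is 0
  have hR : PowerSeries.coeff 5 (-(6 * d⁄dX R (d⁄dX R g) * d⁄dX R g * g)
        - 2 * PowerSeries.C a * g ^ 2 * d⁄dX R g
        + 6 * (d⁄dX R g) ^ 3
        + d⁄dX R (d⁄dX R (d⁄dX R g)) * g ^ 2) = 0 := by
    have t1 : EvenS (6 * d⁄dX R (d⁄dX R g) * d⁄dX R g * g) :=
      evenS_of_oddS_mul (oddS_mul' (oddS_mul h6 hg'') hg') hg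
    have t2 : EvenS (2 * PowerSeries.C a * g ^ 2 * d⁄dX R g) :=
      evenS_mul (evenS_mul (evenS_mul h2 (evenS_C a)) hg2) hg'
    have t3 : EvenS (6 * (d⁄dX R g) ^ 3) := by
      rw [pow_succ, pow_two]
      exact evenS_mul h6 (evenS_mul (evenS_mul hg' hg') hg')
    have t4 : EvenS (d⁄dX R (d⁄dX R (d⁄dX R g)) * g ^ 2) := evenS_mul hg''' hg2
    rw [map_add, map_add, map_sub, map_neg, t1 5 hodd5, t2 5 hodd5, t3 5 hodd5, t4 5 hodd5]
    ring
  have h6c : (6 : R) * c = 0 := by rw [← hL, heq, hR]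
  have hsm : ((6 : ℚ) • c) = 0 := by
    rw [Algebra.smul_def, map_ofNat]
    exact_mod_cast h6c
  have := congrArg (fun x => ((6 : ℚ)⁻¹) • x) hsm
  simpa [smul_smul] using this
end

section
/- Let R be a commutative ℚ-algebra, a ∈ R, and let g ∈ R⟦X⟧ be an odd formal power series with coefficient 1 in degree 1. If g'·(6 + 6·g·g'' + 2a·g² − 6·(g')²) = g'''·g² holds in R⟦X⟧, then there exists ε ∈ R such that (g')² = 1 + 2a·g² + ε·g⁴. -/
open PowerSeries Finset

lemma deriv_two' {R : Type*} [CommRing R] : d⁄dX R (2 : PowerSeries R) = 0 := by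
  rw [show (2 : PowerSeries R) = C 2 from (map_ofNat (C (R := R)) 2).symm, derivative_C]

lemma ratalg_cancel' {R : Type*} [CommRing R] [Algebra ℚ R] (q : ℚ) (hq : q ≠ 0) (x : R)
    (h : algebraMap ℚ R q * x = 0) : x = 0 := by
  have h2 := congrArg (algebraMap ℚ R q⁻¹ * ·) h
  simpa [← mul_assoc, ← map_mul, inv_mul_cancel₀ hq] using h2

/-- If `g` has zero constant term and linear coefficient `1`, and
`g·Q' = c·g'·Q` with `coeff c Q = 0`, then `Q = 0`. -/
lemma key_vanish {R : Type*} [CommRing R] [Algebra ℚ R] (g Q : PowerSeries R)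
    (hg0 : coeff 0 g = 0) (hg1 : coeff 1 g = 1) (c : ℕ)
    (hc : coeff c Q = 0)
    (h : g * d⁄dX R Q = (c : PowerSeries R) * d⁄dX R g * Q) : Q = 0 := by
  have cancel : ∀ (n : ℕ) (x : R), n ≠ c → (n : R) * x = (c : R) * x → x = 0 := by
    intro n x hne hx
    have hq : ((n : ℚ) - (c : ℚ)) ≠ 0 := by
      simp only [sub_ne_zero, Ne, Nat.cast_injective.eq_iff]; exact_mod_cast hne
    apply ratalg_cancel' _ hq
    have hz : ((n : R) - (c : R)) * x = 0 := by rw [sub_mul, hx, sub_self]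
    calc algebraMap ℚ R ((n:ℚ) - c) * x = ((n : R) - (c : R)) * x := by
          push_cast; simp [map_sub, map_natCast]
      _ = 0 := hz
  ext n
  rw [map_zero]
  induction n using Nat.strong_induction_on with
  | _ n IH =>
  rcases eq_or_ne n c with rfl | hne
  · exact hc
  rcases Nat.eq_zero_or_pos n with rfl | hn
  · have h0 := congrArg (constantCoeff (R := R)) h
    simp only [map_mul, coeff_zero_eq_constantCoeff.symm, hg0] at h0
    rw [zero_mul] at h0
    have h1' : (coeff 0) ((d⁄dX R) g) = 1 := by rw [coeff_derivative, hg1]; ring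
    have h2' : (coeff 0) ((c : PowerSeries R)) = (c : R) := by simp
    rw [h1', h2', mul_one] at h0
    apply cancel 0 _ hne
    rw [Nat.cast_zero, zero_mul]
    exact h0
  have hL := congrArg (coeff n) h
  rw [coeff_mul, Finset.Nat.sum_antidiagonal_eq_sum_range_succ_mk] at hL
  rw [mul_assoc, show ((c : PowerSeries R)) = C (c:R) by simp, coeff_C_mul,
    coeff_mul, Finset.Nat.sum_antidiagonal_eq_sum_range_succ_mk] at hL
  have hLs : ∑ k ∈ range (n + 1), coeff (k, n-k).1 g * coeff (k, n-k).2 (d⁄dX R Q)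
      = (n : R) * coeff n Q := by
    rw [Finset.sum_eq_single 1]
    · simp only
      rw [hg1, coeff_derivative, Nat.sub_add_cancel hn, one_mul, mul_comm]
      congr 1
      push_cast [Nat.cast_sub hn]; ring
    · intro k hk hk1
      simp only
      rcases Nat.eq_zero_or_pos k with rfl | hkpos
      · simp [hg0]
      · have hklt : n - k + 1 < n := by
          simp only [mem_range] at hk; omega
        rw [coeff_derivative, IH _ hklt]
        ring
    · intro hmem
      exact absurd (mem_range.mpr (by omega)) hmem
  have hRs : ∑ k ∈ range (n + 1), coeff (k, n-k).1 (d⁄dX R g) * coeff (k, n-k).2 Q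
      = coeff n Q := by
    rw [Finset.sum_eq_single 0]
    · simp only [Nat.sub_zero, coeff_derivative, hg1]
      ring
    · intro k hk hk0
      simp only
      have hlt : n - k < n := by simp only [mem_range] at hk; omega
      rw [IH _ hlt]; ring
    · intro hmem
      exact absurd (mem_range.mpr (by omega)) hmem
  rw [hLs, hRs] at hL
  exact cancel n _ hne hL

/-- If `g` is an odd power series with linear coefficient `1` over a commutative
`ℚ`-algebra and `g'·(6 + 6·g·g'' + 2a·g² − 6·(g')²) = g'''·g²` holds in `R⟦X⟧`,
then `(g')² = 1 + 2a·g² + ε·g⁴` for some `ε ∈ R`. -/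
theorem statement3 {R : Type*} [CommRing R] [Algebra ℚ R] (a : R) (g : PowerSeries R)
    (hodd : ∀ n, Even n → PowerSeries.coeff n g = 0)
    (h1 : PowerSeries.coeff 1 g = 1)
    (heq : d⁄dX R g * (6 + 6 * g * d⁄dX R (d⁄dX R g) + 2 * PowerSeries.C a * g ^ 2
        - 6 * (d⁄dX R g) ^ 2)
      = d⁄dX R (d⁄dX R (d⁄dX R g)) * g ^ 2) :
    ∃ ε : R,
      (d⁄dX R g) ^ 2 = 1 + 2 * PowerSeries.C a * g ^ 2 + PowerSeries.C ε * g ^ 4 := by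
  have c0 : coeff 0 g = 0 := hodd 0 Even.zero
  have c2 : coeff 2 g = 0 := hodd 2 ⟨1, rfl⟩
  have c4 : coeff 4 g = 0 := hodd 4 ⟨2, rfl⟩
  -- the auxiliary series P := g·g'' - 2·(g')² + 2 + 2a·g² vanishes
  have hP : g * d⁄dX R (g * (d⁄dX R (d⁄dX R g)) - 2 * (d⁄dX R g * d⁄dX R g) + 2
        + 2 * C a * (g * g))
      = ((3 : ℕ) : PowerSeries R) * d⁄dX R g
        * (g * (d⁄dX R (d⁄dX R g)) - 2 * (d⁄dX R g * d⁄dX R g) + 2 + 2 * C a * (g * g)) := by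
    simp only [map_add, map_sub, Derivation.leibniz, derivative_C, smul_eq_mul, deriv_two',
      Nat.cast_ofNat]
    linear_combination -heq
  have hP3 : coeff 3 (g * (d⁄dX R (d⁄dX R g)) - 2 * (d⁄dX R g * d⁄dX R g) + 2
      + 2 * C a * (g * g)) = 0 := by
    rw [show (2 : PowerSeries R) = C 2 from (map_ofNat (C (R := R)) 2).symm]
    simp [coeff_mul, Finset.Nat.sum_antidiagonal_eq_sum_range_succ_mk, Finset.sum_range_succ,
      coeff_derivative, c0, c2, c4, h1]
  have hP0 := key_vanish g _ c0 h1 3 hP3 hP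
  -- coefficient 4 of g⁴ is 1
  have hg4 : coeff 4 (g * g * (g * g)) = 1 := by
    simp [coeff_mul, Finset.Nat.sum_antidiagonal_eq_sum_range_succ_mk, Finset.sum_range_succ,
      c0, c2, h1]
  set ε : R := coeff 4 (d⁄dX R g * d⁄dX R g - 1 - 2 * C a * (g * g)) with hε
  refine ⟨ε, ?_⟩
  have hQ4 : coeff 4 (d⁄dX R g * d⁄dX R g - 1 - 2 * C a * (g * g)
      - C ε * (g * g * (g * g))) = 0 := by
    rw [map_sub, coeff_C_mul, hg4, mul_one, ← hε, sub_self]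
  have hQ : g * d⁄dX R (d⁄dX R g * d⁄dX R g - 1 - 2 * C a * (g * g)
        - C ε * (g * g * (g * g)))
      = ((4 : ℕ) : PowerSeries R) * d⁄dX R g
        * (d⁄dX R g * d⁄dX R g - 1 - 2 * C a * (g * g) - C ε * (g * g * (g * g))) := by
    simp only [map_add, map_sub, Derivation.leibniz, derivative_C, smul_eq_mul, deriv_two',
      Nat.cast_ofNat, map_one, Derivation.map_one_eq_zero]
    linear_combination (2 * d⁄dX R g) * hP0
  have hQ0 := key_vanish g _ c0 h1 4 hQ4 hQ
  linear_combination hQ0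
end

section
/- Let R be a commutative ring and let g ∈ R⟦X⟧ be an odd formal power series with coefficient 1 in degree 1. Then for every even formal power series h ∈ R⟦X⟧ there exists a unique Q ∈ R⟦T⟧ such that h = Q∘(g²), where Q∘(g²) denotes the formal substitution of g² (which has zero constant term) into Q; moreover the constant term of Q equals the constant term of h. -/
open PowerSeries

/-- Formal substitution of a one-variable power series `g` (assumed to have zero
constant term) into a one-variable power series `P`: the coefficient of degree `n`
in `P∘g` only involves the powers `g ^ k` for `k ≤ n`, since `g ^ k` has order at
least `k`. -/
noncomputable def PowerSeries.substPS {R : Type*} [CommSemiring R]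
    (g : PowerSeries R) (P : PowerSeries R) : PowerSeries R :=
  PowerSeries.mk fun n => ∑ k ∈ Finset.range (n + 1),
    PowerSeries.coeff k P * PowerSeries.coeff n (g ^ k)

section Aux

variable {R : Type*} [CommRing R]

lemma coeff_substPS (g P : PowerSeries R) (n : ℕ) :
    PowerSeries.coeff n (substPS g P) =
      ∑ k ∈ Finset.range (n + 1),
        PowerSeries.coeff k P * PowerSeries.coeff n (g ^ k) := by
  simp [PowerSeries.substPS]

lemma even_mul_even (a b : PowerSeries R)
    (ha : ∀ n, Odd n → PowerSeries.coeff n a = 0)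
    (hb : ∀ n, Odd n → PowerSeries.coeff n b = 0) :
    ∀ n, Odd n → PowerSeries.coeff n (a * b) = 0 := by
  intro n hn
  rw [PowerSeries.coeff_mul]
  apply Finset.sum_eq_zero
  intro p hp
  rw [Finset.HasAntidiagonal.mem_antidiagonal] at hp
  rcases Nat.even_or_odd p.1 with h1 | h1
  · have h2 : Odd p.2 := by
      simp [Nat.even_iff, Nat.odd_iff] at *
      omega
    rw [hb _ h2, mul_zero]
  · rw [ha _ h1, zero_mul]

variable (g : PowerSeries R)
variable (hgodd : ∀ n, Even n → PowerSeries.coeff n g = 0)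

include hgodd in
lemma sq_even : ∀ n, Odd n → PowerSeries.coeff n (g ^ 2) = 0 := by
  intro n hn
  rw [sq, PowerSeries.coeff_mul]
  apply Finset.sum_eq_zero
  intro p hp
  rw [Finset.HasAntidiagonal.mem_antidiagonal] at hp
  rcases Nat.even_or_odd p.1 with h1 | h1
  · rw [hgodd _ h1, zero_mul]
  · have h2 : Even p.2 := by
      simp [Nat.even_iff, Nat.odd_iff] at *
      omega
    rw [hgodd _ h2, mul_zero]

include hgodd in
lemma sq_zero : PowerSeries.coeff 0 (g ^ 2) = 0 := by
  have h0 : PowerSeries.coeff 0 g = 0 := hgodd 0 Even.zero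
  simp [sq, PowerSeries.coeff_mul, h0]

include hgodd in
lemma sq_two (hg1 : PowerSeries.coeff 1 g = 1) :
    PowerSeries.coeff 2 (g ^ 2) = 1 := by
  have h0 : PowerSeries.coeff 0 g = 0 := hgodd 0 Even.zero
  have : Finset.HasAntidiagonal.antidiagonal (2 : ℕ) = {(0, 2), (1, 1), (2, 0)} := by decide
  rw [sq, PowerSeries.coeff_mul, this]
  rw [Finset.sum_insert (by decide), Finset.sum_insert (by decide),
    Finset.sum_singleton]
  simp [h0, hg1]

include hgodd in
lemma sqpow_even : ∀ k n, Odd n → PowerSeries.coeff n ((g ^ 2) ^ k) = 0 := by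
  intro k
  induction k with
  | zero =>
    intro n hn
    have : n ≠ 0 := by rintro rfl; simp at hn
    simp [PowerSeries.coeff_one, this]
  | succ k ih =>
    rw [pow_succ]
    exact even_mul_even _ _ ih (sq_even g hgodd)

include hgodd in
lemma sqpow_order : ∀ k n, n < 2 * k → PowerSeries.coeff n ((g ^ 2) ^ k) = 0 := by
  intro k
  induction k with
  | zero => intro n hn; omega
  | succ k ih =>
    intro n hn
    rw [pow_succ, PowerSeries.coeff_mul]
    apply Finset.sum_eq_zero
    intro p hp
    rw [Finset.HasAntidiagonal.mem_antidiagonal] at hp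
    rcases lt_or_ge p.1 (2 * k) with h1 | h1
    · rw [ih _ h1, zero_mul]
    · have h2 : p.2 = 0 ∨ p.2 = 1 := by omega
      rcases h2 with h2 | h2
      · rw [h2, sq_zero g hgodd, mul_zero]
      · rw [h2, sq_even g hgodd 1 odd_one, mul_zero]

include hgodd in
lemma sqpow_lead (hg1 : PowerSeries.coeff 1 g = 1) :
    ∀ k, PowerSeries.coeff (2 * k) ((g ^ 2) ^ k) = 1 := by
  intro k
  induction k with
  | zero => simp
  | succ k ih =>
    rw [pow_succ, PowerSeries.coeff_mul]
    rw [Finset.sum_eq_single (2 * k, 2)]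
    · rw [ih, sq_two g hgodd hg1, one_mul]
    · intro p hp hne
      rw [Finset.HasAntidiagonal.mem_antidiagonal] at hp
      rcases lt_or_ge p.1 (2 * k) with h1 | h1
      · rw [sqpow_order g hgodd _ _ h1, zero_mul]
      · have h2 : p.2 = 0 ∨ p.2 = 1 := by
          rcases Nat.lt_or_ge p.2 2 with h | h
          · omega
          · exfalso; apply hne; have : p.2 = 2 := by omega
            have : p = (2 * k, 2) := by
              cases p; simp_all; omega
            exact this
        rcases h2 with h2 | h2
        · rw [h2, sq_zero g hgodd, mul_zero]
        · rw [h2, sq_even g hgodd 1 odd_one, mul_zero]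
    · intro habs
      exfalso; apply habs
      rw [Finset.HasAntidiagonal.mem_antidiagonal]
      simp
      omega

-- the recursively-defined coefficients of Q
noncomputable def Qc (f h : PowerSeries R) : ℕ → R
  | m => PowerSeries.coeff (2 * m) h -
      ∑ k ∈ (Finset.range m).attach,
        Qc f h k * PowerSeries.coeff (2 * m) (f ^ (k : ℕ))
decreasing_by exact Finset.mem_range.mp k.2

lemma Qc_eq (f h : PowerSeries R) (m : ℕ) :
    Qc f h m = PowerSeries.coeff (2 * m) h -
      ∑ k ∈ Finset.range m, Qc f h k * PowerSeries.coeff (2 * m) (f ^ k) := by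
  rw [Qc, Finset.sum_attach (Finset.range m)
    (fun k => Qc f h k * PowerSeries.coeff (2 * m) (f ^ k))]

include hgodd in
lemma coeff_subst_even (hg1 : PowerSeries.coeff 1 g = 1)
    (Q : PowerSeries R) (m : ℕ) :
    PowerSeries.coeff (2 * m) (substPS (g ^ 2) Q) =
      (∑ k ∈ Finset.range m,
        PowerSeries.coeff k Q * PowerSeries.coeff (2 * m) ((g ^ 2) ^ k)) +
      PowerSeries.coeff m Q := by
  rw [coeff_substPS]
  have hsub : Finset.range (m + 1) ⊆ Finset.range (2 * m + 1) := by
    apply Finset.range_subset_range.mpr; omega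
  rw [← Finset.sum_subset hsub]
  · rw [Finset.sum_range_succ, sqpow_lead g hgodd hg1, mul_one]
  · intro k hk hk'
    rw [Finset.mem_range] at hk hk'
    rw [sqpow_order g hgodd k (2 * m) (by omega), mul_zero]

include hgodd in
lemma unique_coeff (h : PowerSeries R) (hg1 : PowerSeries.coeff 1 g = 1)
    (Q : PowerSeries R) (hQ : h = substPS (g ^ 2) Q) :
    ∀ m, PowerSeries.coeff m Q = Qc (g ^ 2) h m := by
  intro m
  induction m using Nat.strong_induction_on with
  | _ m ih =>
    have heq := congrArg (PowerSeries.coeff (2 * m)) hQ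
    rw [coeff_subst_even g hgodd hg1] at heq
    have hsum : ∑ k ∈ Finset.range m,
        Qc (g ^ 2) h k * PowerSeries.coeff (2 * m) ((g ^ 2) ^ k) =
        ∑ k ∈ Finset.range m,
        PowerSeries.coeff k Q * PowerSeries.coeff (2 * m) ((g ^ 2) ^ k) := by
      apply Finset.sum_congr rfl
      intro k hk
      rw [ih k (Finset.mem_range.mp hk)]
    rw [Qc_eq, hsum, heq]
    ring

end Aux

/-- If `g` is an odd power series with linear coefficient `1`, then every even power
series `h` can be written uniquely as `Q∘(g²)`, and moreover the constant term of `Q`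
equals the constant term of `h`. -/
theorem statement4 {R : Type*} [CommRing R] (g h : PowerSeries R)
    (hgodd : ∀ n, Even n → PowerSeries.coeff n g = 0)
    (hg1 : PowerSeries.coeff 1 g = 1)
    (hheven : ∀ n, Odd n → PowerSeries.coeff n h = 0) :
    (∃! Q : PowerSeries R, h = substPS (g ^ 2) Q) ∧
      ∀ Q : PowerSeries R, h = substPS (g ^ 2) Q →
        PowerSeries.constantCoeff Q = PowerSeries.constantCoeff h := by
  set Q₀ : PowerSeries R := PowerSeries.mk (Qc (g ^ 2) h) with hQ₀
  have hQ₀c : ∀ m, PowerSeries.coeff m Q₀ = Qc (g ^ 2) h m := fun m => by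
    simp [hQ₀]
  have hex : h = substPS (g ^ 2) Q₀ := by
    ext n
    rcases Nat.even_or_odd n with ⟨m, hm⟩ | hodd
    · have hn : n = 2 * m := by omega
      subst hn
      rw [coeff_subst_even g hgodd hg1, hQ₀c, Qc_eq]
      have : ∑ k ∈ Finset.range m,
          PowerSeries.coeff k Q₀ * PowerSeries.coeff (2 * m) ((g ^ 2) ^ k) =
          ∑ k ∈ Finset.range m,
          Qc (g ^ 2) h k * PowerSeries.coeff (2 * m) ((g ^ 2) ^ k) := by
        apply Finset.sum_congr rfl
        intro k _
        rw [hQ₀c]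
      rw [this]
      ring
    · rw [hheven n hodd, coeff_substPS]
      symm
      apply Finset.sum_eq_zero
      intro k _
      rw [sqpow_even g hgodd k n hodd, mul_zero]
  have huniq : ∀ Q : PowerSeries R, h = substPS (g ^ 2) Q → Q = Q₀ := by
    intro Q hQ
    ext m
    rw [unique_coeff g hgodd h hg1 Q hQ m, hQ₀c]
  constructor
  · exact ⟨Q₀, hex, huniq⟩
  · intro Q hQ
    have h0 := unique_coeff g hgodd h hg1 Q hQ 0
    rw [Qc_eq] at h0
    simp at h0
    simp [← PowerSeries.coeff_zero_eq_constantCoeff, h0]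
end

section
/- Let R be a commutative ℚ-algebra and let δ, ε ∈ R. Then there exists a unique formal power series f ∈ R⟦X⟧ with constant term 0 and coefficient 1 in degree 1 satisfying the differential equation (f')² = 1 − 2δ·f² + ε·f⁴ in R⟦X⟧. (This power series is the formal elliptic sine sn(x) when R = ℚ[δ,ε].) -/
open PowerSeries Finset

section Aux
set_option linter.unusedSectionVars false
variable {A : Type*} [CommRing A] [Algebra ℚ A]

lemma Sn.qsmul_cancel {c : ℚ} (hc : c ≠ 0) {x y : A} (h : c • x = c • y) : x = y := by
  have h2 := congrArg (fun z => c⁻¹ • z) h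
  simpa [smul_smul, inv_mul_cancel₀ hc] using h2

lemma Sn.natCast_mul_cancel {n : ℕ} (hn : n ≠ 0) {x y : A} (h : (n : A) * x = (n : A) * y) :
    x = y := by
  apply Sn.qsmul_cancel (c := (n:ℚ)) (by exact_mod_cast hn)
  rwa [Algebra.smul_def, Algebra.smul_def, map_natCast]

noncomputable def Sn.a (δ ε : A) : ℕ → A
  | 0 => 0
  | 1 => 1
  | n + 2 => ((((n:ℚ)+1) * ((n:ℚ)+2))⁻¹) •
      (-(2*δ) * Sn.a δ ε n + 2*ε * ∑ p ∈ (antidiagonal n).attach,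
        Sn.a δ ε p.1.1 * ∑ q ∈ (antidiagonal p.1.2).attach, Sn.a δ ε q.1.1 * Sn.a δ ε q.1.2)
termination_by n => n
decreasing_by
  all_goals
    try have hp := Finset.HasAntidiagonal.mem_antidiagonal.mp p.2
    try have hq := Finset.HasAntidiagonal.mem_antidiagonal.mp q.2
    omega

lemma Sn.a_rec (δ ε : A) (n : ℕ) :
    ((n:A)+1) * ((n:A)+2) * Sn.a δ ε (n+2) =
      -(2*δ) * Sn.a δ ε n + 2*ε * ∑ p ∈ antidiagonal n,
        Sn.a δ ε p.1 * ∑ q ∈ antidiagonal p.2, Sn.a δ ε q.1 * Sn.a δ ε q.2 := by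
  rw [Sn.a]
  rw [Finset.sum_attach (antidiagonal n)
    (fun p => Sn.a δ ε p.1 * ∑ q ∈ (antidiagonal p.2).attach, Sn.a δ ε q.1.1 * Sn.a δ ε q.1.2)]
  simp_rw [fun p : ℕ × ℕ => Finset.sum_attach (antidiagonal p.2)
    (fun q => Sn.a δ ε q.1 * Sn.a δ ε q.2)]
  have hc : (((n:ℚ)+1) * ((n:ℚ)+2)) ≠ 0 := by positivity
  have h1 : ((n:A)+1) * ((n:A)+2) = algebraMap ℚ A (((n:ℚ)+1) * ((n:ℚ)+2)) := by
    simp [map_mul, map_add, map_ofNat]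
  rw [h1, Algebra.smul_def, ← mul_assoc, ← map_mul, mul_inv_cancel₀ hc, map_one, one_mul]

lemma Sn.coeff_cube (f : A⟦X⟧) (n : ℕ) :
    coeff n (f^3) = ∑ p ∈ antidiagonal n,
      coeff p.1 f * ∑ q ∈ antidiagonal p.2, coeff q.1 f * coeff q.2 f := by
  rw [show f^3 = f * (f * f) by ring, coeff_mul]
  exact Finset.sum_congr rfl fun p _ => by rw [coeff_mul]

lemma Sn.ode2 (δ ε : A) :
    d⁄dX A (d⁄dX A (mk (Sn.a δ ε))) =
      -(2 * C δ) * mk (Sn.a δ ε) + 2 * C ε * (mk (Sn.a δ ε))^3 := by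
  ext n
  have h1 : -(2 * C δ) = C (-(2*δ)) := by simp [map_neg, map_mul, map_ofNat]
  have h2 : 2 * C ε = C (2*ε) := by simp [map_mul, map_ofNat]
  rw [coeff_derivative, coeff_derivative, map_add, h1, h2, coeff_C_mul, coeff_C_mul,
    Sn.coeff_cube, coeff_mk]
  simp only [coeff_mk]
  push_cast
  linear_combination Sn.a_rec δ ε n

lemma Sn.unique2 {δ ε : A} {f g : A⟦X⟧}
    (hf0 : constantCoeff f = 0) (hf1 : coeff 1 f = 1)
    (hf : d⁄dX A (d⁄dX A f) = -(2 * C δ) * f + 2 * C ε * f^3)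
    (hg0 : constantCoeff g = 0) (hg1 : coeff 1 g = 1)
    (hg : d⁄dX A (d⁄dX A g) = -(2 * C δ) * g + 2 * C ε * g^3) : f = g := by
  suffices h : ∀ n, coeff n f = coeff n g by ext n; exact h n
  intro n
  induction n using Nat.strong_induction_on with
  | _ n ih =>
    match n with
    | 0 => rw [coeff_zero_eq_constantCoeff] at *; rw [hf0, hg0]
    | 1 => rw [hf1, hg1]
    | (n+2) =>
      have hcube : coeff n (f^3) = coeff n (g^3) := by
        rw [Sn.coeff_cube, Sn.coeff_cube]
        refine Finset.sum_congr rfl fun p hp => ?_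
        have hp' := Finset.HasAntidiagonal.mem_antidiagonal.mp hp
        rw [ih p.1 (by omega)]
        congr 1
        refine Finset.sum_congr rfl fun q hq => ?_
        have hq' := Finset.HasAntidiagonal.mem_antidiagonal.mp hq
        rw [ih q.1 (by omega), ih q.2 (by omega)]
      have e1 : -(2 * C δ) = C (-(2*δ)) := by simp [map_neg, map_mul, map_ofNat]
      have e2 : 2 * C ε = C (2*ε) := by simp [map_mul, map_ofNat]
      rw [e1, e2] at hf hg
      have h1 := congrArg (coeff n) hf
      have h2 := congrArg (coeff n) hg
      rw [coeff_derivative, coeff_derivative, map_add, coeff_C_mul, coeff_C_mul] at h1 h2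
      rw [show n+1+1 = n+2 from rfl] at h1 h2
      apply Sn.natCast_mul_cancel (n := (n+2)*(n+1)) (by positivity)
      push_cast at h1 h2 ⊢
      rw [hcube, ih n (by omega)] at h1
      linear_combination h1 - h2

lemma Sn.q_to_p {δ ε : A} {f : A⟦X⟧}
    (h0 : constantCoeff f = 0) (h1 : coeff 1 f = 1)
    (hf : d⁄dX A (d⁄dX A f) = -(2 * C δ) * f + 2 * C ε * f^3) :
    (d⁄dX A f)^2 = 1 - 2 * C δ * f^2 + C ε * f^4 := by
  have e1 : (2 : A⟦X⟧) * C δ = C (2*δ) := by simp [map_mul, map_ofNat]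
  have e2 : (2 : A⟦X⟧) * C ε = C (2*ε) := by simp [map_mul, map_ofNat]
  have key : d⁄dX A ((d⁄dX A f)^2 - (1 - 2 * C δ * f^2 + C ε * f^4)) =
      2 * d⁄dX A f * d⁄dX A (d⁄dX A f)
        + C (2*δ) * (2 * f * d⁄dX A f) - C ε * (4 * f^3 * d⁄dX A f) := by
    rw [e1]
    simp only [map_sub, map_add, Derivation.leibniz_pow, Derivation.leibniz, derivative_C,
      Derivation.map_one_eq_zero, smul_eq_mul, nsmul_eq_mul]
    push_cast
    ring
  have hg0 : d⁄dX A ((d⁄dX A f)^2 - (1 - 2 * C δ * f^2 + C ε * f^4)) = d⁄dX A 0 := by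
    rw [key, hf, map_zero, ← e1]
    ring
  have hc0 : constantCoeff ((d⁄dX A f)^2 - (1 - 2 * C δ * f^2 + C ε * f^4))
      = constantCoeff 0 := by
    have hd : constantCoeff (d⁄dX A f) = 1 := by
      rw [← coeff_zero_eq_constantCoeff, coeff_derivative]
      simpa using h1
    simp [map_sub, map_add, map_mul, map_pow, h0, hd, constantCoeff_C]
  haveI : IsAddTorsionFree A := IsAddTorsionFree.of_module_rat A
  have := derivative.ext hg0 hc0
  linear_combination this

lemma Sn.p_to_q {δ ε : A} {f : A⟦X⟧}
    (h0 : constantCoeff f = 0) (h1 : coeff 1 f = 1)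
    (hP : (d⁄dX A f)^2 = 1 - 2 * C δ * f^2 + C ε * f^4) :
    d⁄dX A (d⁄dX A f) = -(2 * C δ) * f + 2 * C ε * f^3 := by
  have e1 : (2 : A⟦X⟧) * C δ = C (2*δ) := by simp [map_mul, map_ofNat]
  have hunit : IsUnit (d⁄dX A f) := by
    rw [PowerSeries.isUnit_iff_constantCoeff, ← coeff_zero_eq_constantCoeff, coeff_derivative]
    simpa [h1] using isUnit_one
  have hD := congrArg (d⁄dX A) hP
  have key1 : d⁄dX A ((d⁄dX A f)^2) = 2 * d⁄dX A f * d⁄dX A (d⁄dX A f) := by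
    simp only [Derivation.leibniz_pow, smul_eq_mul, nsmul_eq_mul]
    push_cast
    ring
  have key2 : d⁄dX A (1 - 2 * C δ * f^2 + C ε * f^4) =
      d⁄dX A f * (-(2 * C (2*δ)) * f + 4 * C ε * f^3) := by
    rw [e1]
    simp only [map_sub, map_add, Derivation.leibniz_pow, Derivation.leibniz, derivative_C,
      Derivation.map_one_eq_zero, smul_eq_mul, nsmul_eq_mul]
    push_cast
    ring
  rw [key1, key2] at hD
  have h2 : d⁄dX A f * (2 * d⁄dX A (d⁄dX A f)) =
      d⁄dX A f * (-(2 * C (2*δ)) * f + 4 * C ε * f^3) := by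
    linear_combination hD
  have h3 := hunit.mul_left_cancel h2
  apply Sn.natCast_mul_cancel (A := A⟦X⟧) (n := 2) (by norm_num)
  push_cast
  linear_combination h3 + 2*f*e1

end Aux

/-- Over a commutative `ℚ`-algebra there is a unique formal power series `f` with
constant term `0` and linear coefficient `1` satisfying `(f')² = 1 − 2δ·f² + ε·f⁴`
(the formal elliptic sine). -/
theorem statement7 {R : Type*} [CommRing R] [Algebra ℚ R] (δ ε : R) :
    ∃! f : PowerSeries R,
      PowerSeries.constantCoeff f = 0 ∧ PowerSeries.coeff 1 f = 1 ∧
        (d⁄dX R f) ^ 2 = 1 - 2 * PowerSeries.C δ * f ^ 2 + PowerSeries.C ε * f ^ 4 := by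
  refine ⟨PowerSeries.mk (Sn.a δ ε), ⟨?_, ?_, ?_⟩, ?_⟩
  · simp [← coeff_zero_eq_constantCoeff, coeff_mk, Sn.a]
  · simp [coeff_mk, Sn.a]
  · exact Sn.q_to_p (by simp [← coeff_zero_eq_constantCoeff, coeff_mk, Sn.a])
      (by simp [coeff_mk, Sn.a]) (Sn.ode2 δ ε)
  · rintro g ⟨hg0, hg1, hgP⟩
    exact Sn.unique2 hg0 hg1 (Sn.p_to_q hg0 hg1 hgP)
      (by simp [← coeff_zero_eq_constantCoeff, coeff_mk, Sn.a])
      (by simp [coeff_mk, Sn.a]) (Sn.ode2 δ ε)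
end

section
/- Let R be a commutative ℚ-algebra, let g ∈ R⟦X⟧ be a formal power series with zero constant term whose coefficient in degree 1 is a unit of R, and let (a_k)_{k≥2} be a family of elements of R. If the identity Σ_{k≥2} 6(k−1)·a_k·g^{2k} = Σ_{k≥2} k(2k−1)·a_k·g^{2k} holds in R⟦X⟧ (both sums converge in the X-adic topology since g^{2k} has order at least 2k), then a_k = 0 for all k ≥ 3. -/
open PowerSeries

private theorem aux_hzero {R : Type*} [CommRing R] (g : PowerSeries R)
    (h0 : constantCoeff g = 0) (m n : ℕ) (hn : n < m) :
    coeff n (g ^ m) = 0 := by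
  obtain ⟨h, rfl⟩ := X_dvd_iff.mpr h0
  rw [mul_pow, coeff_X_pow_mul', if_neg (by omega)]

private theorem aux_htop {R : Type*} [CommRing R] (g : PowerSeries R)
    (h0 : constantCoeff g = 0) (m : ℕ) :
    coeff m (g ^ m) = (coeff 1 g) ^ m := by
  obtain ⟨h, rfl⟩ := X_dvd_iff.mpr h0
  rw [mul_pow, coeff_X_pow_mul', if_pos le_rfl, Nat.sub_self]
  simp [← map_pow]

/-- If `g` has zero constant term and unit linear coefficient, and
`Σ_{k≥2} 6(k−1)·a_k·g^{2k} = Σ_{k≥2} k(2k−1)·a_k·g^{2k}` holds in `R⟦X⟧`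
(the sums taken in the product topology with `R` discrete, i.e. the `X`-adic
topology on coefficients), then `a_k = 0` for all `k ≥ 3`. -/
theorem statement14 {R : Type*} [CommRing R] [Algebra ℚ R] (g : PowerSeries R)
    (h0 : PowerSeries.constantCoeff g = 0)
    (h1 : IsUnit (PowerSeries.coeff 1 g))
    (a : ℕ → R)
    (heq :
      letI : TopologicalSpace R := ⊥
      letI : TopologicalSpace (PowerSeries R) := Pi.topologicalSpace
      (∑' k : {k : ℕ // 2 ≤ k}, (((6 * (k.1 - 1) : ℕ) : R) * a k.1) • g ^ (2 * k.1))
        = ∑' k : {k : ℕ // 2 ≤ k}, (((k.1 * (2 * k.1 - 1) : ℕ) : R) * a k.1) • g ^ (2 * k.1)) :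
    ∀ k : ℕ, 3 ≤ k → a k = 0 := by
  letI : TopologicalSpace R := ⊥
  haveI : DiscreteTopology R := ⟨rfl⟩
  letI : TopologicalSpace (PowerSeries R) := Pi.topologicalSpace
  -- summability of any such family
  have hsum : ∀ (c : ℕ → R), Summable (fun k : {k : ℕ // 2 ≤ k} => c k.1 • g ^ (2 * k.1)) := by
    intro c
    refine Pi.summable.mpr fun d => ?_
    refine summable_of_ne_finset_zero (s := (Finset.range (d () + 1)).subtype (2 ≤ ·)) ?_
    intro k hk
    have hk' : d () + 1 ≤ k.1 := by
      by_contra hlt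
      exact hk (Finset.mem_subtype.mpr (Finset.mem_range.mpr (by omega)))
    have hd : (Finsupp.single () (d ()) : Unit →₀ ℕ) = d := by
      ext; simp [Finsupp.single_apply]
    show (c k.1 • g ^ (2 * k.1)) d = 0
    rw [← hd]
    show coeff (d ()) (c k.1 • g ^ (2 * k.1)) = 0
    rw [map_smul, aux_hzero g h0 _ _ (by omega)]
    simp
  -- coefficient extraction: for each n, coeff n of such a tsum is a finite sum
  have hcoeff : ∀ (c : ℕ → R) (n : ℕ),
      coeff n (∑' k : {k : ℕ // 2 ≤ k}, c k.1 • g ^ (2 * k.1))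
        = ∑ k ∈ (Finset.range (n + 1)).subtype (2 ≤ ·), c k.1 * coeff n (g ^ (2 * k.1)) := by
    intro c n
    have happ : coeff n (∑' k : {k : ℕ // 2 ≤ k}, c k.1 • g ^ (2 * k.1))
        = ∑' k : {k : ℕ // 2 ≤ k}, coeff n (c k.1 • g ^ (2 * k.1)) := by
      exact tsum_apply (hsum c) (x := Finsupp.single () n)
    rw [happ]
    rw [tsum_eq_sum (s := (Finset.range (n + 1)).subtype (2 ≤ ·)) ?_]
    · exact Finset.sum_congr rfl fun k _ => by rw [map_smul, smul_eq_mul]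
    · intro k hk
      have hk' : n + 1 ≤ k.1 := by
        by_contra hlt
        exact hk (Finset.mem_subtype.mpr (Finset.mem_range.mpr (by omega)))
      rw [map_smul, aux_hzero g h0 _ _ (by omega)]
      simp
  -- main induction
  intro k hk
  induction k using Nat.strong_induction_on with
  | _ k ih =>
  -- look at coefficient 2*k
  have hco := congrArg (coeff (2 * k)) heq
  rw [hcoeff (fun m => ((6 * (m - 1) : ℕ) : R) * a m), hcoeff (fun m => ((m * (2 * m - 1) : ℕ) : R) * a m)] at hco
  -- the two finite sums differ only in the top term
  have hdiff : ∑ j ∈ (Finset.range (2 * k + 1)).subtype (2 ≤ ·),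
      ((((j.1 * (2 * j.1 - 1) : ℕ) : R) - ((6 * (j.1 - 1) : ℕ) : R)) * a j.1
        * coeff (2 * k) (g ^ (2 * j.1))) = 0 := by
    have : ∀ j : {k : ℕ // 2 ≤ k},
        (((j.1 * (2 * j.1 - 1) : ℕ) : R) - ((6 * (j.1 - 1) : ℕ) : R)) * a j.1
          * coeff (2 * k) (g ^ (2 * j.1))
        = ((j.1 * (2 * j.1 - 1) : ℕ) : R) * a j.1 * coeff (2 * k) (g ^ (2 * j.1))
          - ((6 * (j.1 - 1) : ℕ) : R) * a j.1 * coeff (2 * k) (g ^ (2 * j.1)) := by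
      intro j; ring
    rw [Finset.sum_congr rfl fun j _ => this j, Finset.sum_sub_distrib, ← hco, sub_self]
  -- all terms except j = k vanish
  have hkmem : (⟨k, by omega⟩ : {k : ℕ // 2 ≤ k}) ∈ (Finset.range (2 * k + 1)).subtype (2 ≤ ·) :=
    Finset.mem_subtype.mpr (Finset.mem_range.mpr (by show k < 2 * k + 1; omega))
  rw [Finset.sum_eq_single_of_mem _ hkmem ?side] at hdiff
  case side =>
    intro j _ hj
    rcases lt_or_ge j.1 3 with h3 | h3
    · -- j = 2 : the coefficients agree
      have : j.1 = 2 := by omega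
      rw [this]
      norm_num
    · rcases lt_or_ge j.1 k with hlt | hge
      · rw [ih j.1 hlt h3]; ring
      · -- j.1 ≥ k and j ≠ k means j.1 > k, so 2*j.1 > 2*k and coeff vanishes
        have hne : j.1 ≠ k := fun h => hj (Subtype.ext h)
        rw [aux_hzero g h0 _ _ (by omega)]; ring
  -- now the top term
  rw [aux_htop g h0 (2 * k)] at hdiff
  set u := coeff 1 g ^ (2 * k) with hu
  have hcast : ((k * (2 * k - 1) : ℕ) : R) - ((6 * (k - 1) : ℕ) : R)
      = ((k * (2 * k - 1) - 6 * (k - 1) : ℕ) : R) := by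
    have hle : 6 * (k - 1) ≤ k * (2 * k - 1) := by
      obtain ⟨m, rfl⟩ : ∃ m, k = m + 3 := ⟨k - 3, by omega⟩
      have e1 : m + 3 - 1 = m + 2 := by omega
      have e2 : 2 * (m + 3) - 1 = 2 * m + 5 := by omega
      rw [e1, e2]; nlinarith
    rw [Nat.cast_sub hle]
  rw [hcast] at hdiff
  have hmne : (k * (2 * k - 1) - 6 * (k - 1) : ℕ) ≠ 0 := by
    obtain ⟨m, rfl⟩ : ∃ m, k = m + 3 := ⟨k - 3, by omega⟩
    have e1 : m + 3 - 1 = m + 2 := by omega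
    have e2 : 2 * (m + 3) - 1 = 2 * m + 5 := by omega
    rw [e1, e2]
    have : 6 * (m + 2) < (m + 3) * (2 * m + 5) := by nlinarith
    omega
  have hunit : IsUnit (((k * (2 * k - 1) - 6 * (k - 1) : ℕ) : R)) := by
    have : ((k * (2 * k - 1) - 6 * (k - 1) : ℕ) : R)
        = algebraMap ℚ R ((k * (2 * k - 1) - 6 * (k - 1) : ℕ) : ℚ) := by
      rw [map_natCast]
    rw [this]
    exact (isUnit_iff_ne_zero.mpr (by exact_mod_cast hmne)).map (algebraMap ℚ R)
  have huu : IsUnit u := h1.pow _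
  have h2 : a k * u = 0 := by
    refine hunit.mul_right_eq_zero.mp ?_
    rw [← mul_assoc]; exact hdiff
  exact huu.mul_left_eq_zero.mp h2
end
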